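/- arXiv:2603.16409 — 3 statements merged into one kernel-verified Lean document; each statement's English description precedes it below -/
import Mathlib

section
/- Let T > 0 and let f: (0,T] → [0,∞] be measurable with f ∈ L⁴(0,T). Let A > 0 and define F(t) := (1/t)∫₀^t f(s) e^{A|ln(t/s)|^{1/2}} ds for t ∈ (0,T]. Then F ∈ L⁴(0,T) and ‖F‖_{L⁴(0,T)} ≤ C_A ‖f‖_{L⁴(0,T)}, where C_A > 0 is a constant depending only on A. -/
/- STATEMENT 12: Let T > 0, f : (0,T] → [0,∞] measurable with f ∈ L⁴(0,T), A > 0, and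
F(t) := (1/t)∫₀ᵗ f(s) e^{A|ln(t/s)|^{1/2}} ds. Then F ∈ L⁴(0,T) and
‖F‖_{L⁴(0,T)} ≤ C_A ‖f‖_{L⁴(0,T)} with C_A depending only on A. -/

noncomputable section

open MeasureTheory Set
open scoped ENNReal

-- lintegral of rpow over Ioi, p < -1
lemma lint_Ioi_rpow {p : ℝ} (hp : p < -1) {c : ℝ} (hc : 0 < c) :
    ∫⁻ t in Ioi c, ENNReal.ofReal (t ^ p) = ENNReal.ofReal (-c ^ (p + 1) / (p + 1)) := by
  rw [← integral_Ioi_rpow_of_lt hp hc]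
  rw [← ofReal_integral_eq_lintegral_ofReal (integrableOn_Ioi_rpow_of_lt hp hc)]
  filter_upwards [ae_restrict_mem measurableSet_Ioi] with x hx
  exact Real.rpow_nonneg (le_of_lt (hc.trans hx)) _

-- lintegral of rpow over Ioc 0 t, -1 < p
lemma lint_Ioc_rpow {p : ℝ} (hp : -1 < p) {c : ℝ} (hc : 0 < c) :
    ∫⁻ s in Ioc (0:ℝ) c, ENNReal.ofReal (s ^ p) = ENNReal.ofReal (c ^ (p + 1) / (p + 1)) := by
  have hint : IntervalIntegrable (fun s : ℝ => s ^ p) volume 0 c :=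
    intervalIntegral.intervalIntegrable_rpow' hp
  have hIn : IntegrableOn (fun s : ℝ => s ^ p) (Ioc 0 c) volume := by
    rw [← uIoc_of_le hc.le]
    exact hint.def'
  rw [← ofReal_integral_eq_lintegral_ofReal hIn ?_]
  · congr 1
    rw [← intervalIntegral.integral_of_le hc.le, integral_rpow (Or.inl hp)]
    rw [Real.zero_rpow (by linarith)]
    ring
  · filter_upwards [ae_restrict_mem measurableSet_Ioc] with x hx
    exact Real.rpow_nonneg hx.1.le _

lemma kernel_bd {A : ℝ} (hA : 0 < A) {s t : ℝ} (hs : 0 < s) (hst : s ≤ t) :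
    Real.exp (A * Real.sqrt |Real.log (t / s)|) ≤
      Real.exp (3 * A ^ 2) * (t / s) ^ ((1:ℝ)/12) := by
  have ht : 0 < t := hs.trans_le hst
  have hr : (1:ℝ) ≤ t / s := (one_le_div hs).2 hst
  have hlog : 0 ≤ Real.log (t / s) := Real.log_nonneg hr
  set x := Real.log (t / s) with hx
  have habs : |x| = x := abs_of_nonneg hlog
  have hkey : A * Real.sqrt x ≤ 3 * A ^ 2 + x / 12 := by
    nlinarith [sq_nonneg (Real.sqrt x - 6 * A), Real.sq_sqrt hlog, Real.sqrt_nonneg x]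
  calc Real.exp (A * Real.sqrt |x|) ≤ Real.exp (3 * A ^ 2 + x / 12) := by
        rw [habs]; exact Real.exp_le_exp.2 hkey
    _ = Real.exp (3 * A ^ 2) * (t / s) ^ ((1:ℝ)/12) := by
        rw [Real.exp_add, Real.rpow_def_of_pos (div_pos ht hs)]
        simp only [hx, div_eq_mul_inv]; ring_nf

lemma swap_bd {T : ℝ} (hT : 0 < T) (f : ℝ → ℝ≥0∞) (hf : Measurable f) :
    (∫⁻ t in Ioc (0:ℝ) T, ∫⁻ s in Ioc (0:ℝ) t,
        f s ^ 4 * ENNReal.ofReal (t ^ (-23/12 : ℝ) * s ^ (11/12 : ℝ)))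
      ≤ ENNReal.ofReal (12/11) * ∫⁻ s in Ioc (0:ℝ) T, f s ^ 4 := by
  set g : ℝ → ℝ → ℝ≥0∞ := fun t s =>
    f s ^ 4 * ENNReal.ofReal (t ^ (-23/12 : ℝ) * s ^ (11/12 : ℝ)) with hg
  have hmeas : Measurable (Function.uncurry fun t s => (Iic t).indicator (g t) s) := by
    have h1 : (Function.uncurry fun t s => (Iic t).indicator (g t) s)
        = ({p : ℝ × ℝ | p.2 ≤ p.1}).indicator (fun p => g p.1 p.2) := by
      ext p
      simp [Function.uncurry, Set.indicator_apply]
    rw [h1]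
    apply Measurable.indicator
    · apply Measurable.mul
      · exact (hf.comp measurable_snd).pow_const 4
      · apply ENNReal.measurable_ofReal.comp
        measurability
    · exact measurableSet_le measurable_snd measurable_fst
  -- rewrite inner integral as integral over Ioc 0 T of an indicator
  have step1 : ∀ t ∈ Ioc (0:ℝ) T,
      (∫⁻ s in Ioc (0:ℝ) t, g t s) = ∫⁻ s in Ioc (0:ℝ) T, (Iic t).indicator (g t) s := by
    intro t ht
    rw [lintegral_indicator measurableSet_Iic, Measure.restrict_restrict measurableSet_Iic]
    congr 1
    rw [Set.inter_comm, Set.Ioc_inter_Iic, min_eq_right ht.2]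
  calc (∫⁻ t in Ioc (0:ℝ) T, ∫⁻ s in Ioc (0:ℝ) t, g t s)
      = ∫⁻ t in Ioc (0:ℝ) T, ∫⁻ s in Ioc (0:ℝ) T, (Iic t).indicator (g t) s :=
        setLIntegral_congr_fun measurableSet_Ioc step1
    _ = ∫⁻ s in Ioc (0:ℝ) T, ∫⁻ t in Ioc (0:ℝ) T, (Iic t).indicator (g t) s :=
        lintegral_lintegral_swap hmeas.aemeasurable
    _ ≤ ∫⁻ s in Ioc (0:ℝ) T, f s ^ 4 * ENNReal.ofReal (12/11) := by
        apply lintegral_mono_ae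
        filter_upwards [ae_restrict_mem measurableSet_Ioc] with s hs
        have hs0 : 0 < s := hs.1
        have e1 : (fun t => (Iic t).indicator (g t) s) = (Ici s).indicator (fun t => g t s) := by
          ext t
          simp [Set.indicator_apply]
        rw [e1, lintegral_indicator measurableSet_Ici, Measure.restrict_restrict measurableSet_Ici]
        calc (∫⁻ t in Ici s ∩ Ioc 0 T, g t s)
            ≤ ∫⁻ t in Ici s, g t s := lintegral_mono_set inter_subset_left
          _ = ∫⁻ t in Ioi s, g t s := (setLIntegral_congr Ioi_ae_eq_Ici).symm
          _ = (f s ^ 4 * ENNReal.ofReal (s ^ (11/12:ℝ))) *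
                ∫⁻ t in Ioi s, ENNReal.ofReal (t ^ (-23/12:ℝ)) := by
              rw [← lintegral_const_mul _ (by measurability)]
              congr 1
              ext t
              simp only [hg]
              rw [ENNReal.ofReal_mul' (Real.rpow_nonneg hs0.le _)]
              ring
          _ = f s ^ 4 * ENNReal.ofReal (12/11) := by
              rw [lint_Ioi_rpow (by norm_num) hs0]
              rw [mul_assoc, ← ENNReal.ofReal_mul (Real.rpow_nonneg hs0.le _)]
              congr 2
              rw [show (-23/12 : ℝ) + 1 = -(11/12) by norm_num, Real.rpow_neg hs0.le]
              have h2 : s ^ ((11:ℝ)/12) ≠ 0 := ne_of_gt (Real.rpow_pos_of_pos hs0 _)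
              field_simp
    _ = ENNReal.ofReal (12/11) * ∫⁻ s in Ioc (0:ℝ) T, f s ^ 4 := by
        rw [← lintegral_const_mul _ (hf.pow_const 4)]
        simp [mul_comm]

lemma real_id3 {t s : ℝ} (ht : 0 < t) (hs : 0 < s) :
    ((t:ℝ)^(4:ℕ))⁻¹ * ((12/7)^3 * t ^ ((2:ℝ))) * ((t/s) ^ ((1:ℝ)/12) * s)
      = (12/7)^3 * (t ^ (-23/12 : ℝ) * s ^ (11/12 : ℝ)) := by
  have e1 : ((t:ℝ)^(4:ℕ))⁻¹ = t ^ (-4 : ℝ) := by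
    rw [← Real.rpow_natCast t 4, ← Real.rpow_neg ht.le]
    norm_num
  have ediv : (t/s) ^ ((1:ℝ)/12) = t ^ ((1:ℝ)/12) * s ^ (-((1:ℝ)/12)) := by
    rw [Real.div_rpow ht.le hs.le, Real.rpow_neg hs.le, div_eq_mul_inv]
  rw [e1, ediv]
  have h1 : t ^ (-4:ℝ) * t ^ ((2:ℝ)) * t ^ ((1:ℝ)/12) = t ^ (-23/12 : ℝ) := by
    rw [← Real.rpow_add ht, ← Real.rpow_add ht]; norm_num
  have h2 : s ^ (-((1:ℝ)/12)) * s = s ^ (11/12 : ℝ) := by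
    rw [← Real.rpow_add_one hs.ne']; norm_num
  calc t ^ (-4:ℝ) * ((12/7)^3 * t ^ ((2:ℝ))) * (t ^ ((1:ℝ)/12) * s ^ (-((1:ℝ)/12)) * s)
      = (12/7)^3 * ((t ^ (-4:ℝ) * t ^ ((2:ℝ)) * t ^ ((1:ℝ)/12)) * (s ^ (-((1:ℝ)/12)) * s)) := by
        ring
    _ = (12/7)^3 * (t ^ (-23/12 : ℝ) * s ^ (11/12 : ℝ)) := by rw [h1, h2]

lemma meas_r (t a b : ℝ) : Measurable fun s : ℝ => (t/s) ^ a * s ^ b :=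
  ((measurable_const.div measurable_id).pow measurable_const).mul
    (measurable_id.pow measurable_const)

lemma holder_bd (f : ℝ → ℝ≥0∞) (hf : Measurable f) {t : ℝ} (ht : 0 < t) :
    ((ENNReal.ofReal t)⁻¹ *
        ∫⁻ s in Ioc (0:ℝ) t, f s * ENNReal.ofReal ((t/s) ^ ((1:ℝ)/12))) ^ 4
      ≤ ENNReal.ofReal ((12/7)^3) *
        ∫⁻ s in Ioc (0:ℝ) t, f s ^ 4 * ENNReal.ofReal (t ^ (-23/12 : ℝ) * s ^ (11/12 : ℝ)) := by
  set u : ℝ → ℝ≥0∞ := fun s => f s * ENNReal.ofReal ((t/s) ^ ((1:ℝ)/48) * s ^ ((1:ℝ)/4)) with hu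
  set v : ℝ → ℝ≥0∞ := fun s => ENNReal.ofReal ((t/s) ^ ((1:ℝ)/16) * s ^ (-((1:ℝ)/4))) with hv
  have hum : Measurable u := hf.mul (meas_r t _ _).ennreal_ofReal
  have hvm : Measurable v := (meas_r t _ _).ennreal_ofReal
  have hpq : Real.HolderConjugate 4 (4/3) := ⟨by norm_num, by norm_num, by norm_num⟩
  set X := ∫⁻ s in Ioc (0:ℝ) t, u s ^ (4:ℝ) with hX
  set Y := ∫⁻ s in Ioc (0:ℝ) t, v s ^ ((4:ℝ)/3) with hY
  have hsplit : (∫⁻ s in Ioc (0:ℝ) t, f s * ENNReal.ofReal ((t/s) ^ ((1:ℝ)/12)))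
      ≤ X ^ ((1:ℝ)/4) * Y ^ ((3:ℝ)/4) := by
    have e0 : (∫⁻ s in Ioc (0:ℝ) t, f s * ENNReal.ofReal ((t/s) ^ ((1:ℝ)/12)))
        = ∫⁻ s in Ioc (0:ℝ) t, (u * v) s := by
      apply setLIntegral_congr_fun measurableSet_Ioc
      intro s hs
      have hs0 : 0 < s := hs.1
      have hts : 0 < t / s := div_pos ht hs0
      simp only [hu, hv, Pi.mul_apply]
      rw [mul_assoc, ← ENNReal.ofReal_mul (by positivity)]
      congr 2
      rw [mul_mul_mul_comm, ← Real.rpow_add hts, ← Real.rpow_add hs0]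
      norm_num
    rw [e0]
    have h2 := ENNReal.lintegral_mul_le_Lp_mul_Lq (volume.restrict (Ioc (0:ℝ) t)) hpq
      hum.aemeasurable hvm.aemeasurable
    rw [show (1:ℝ)/(4/3) = 3/4 by norm_num] at h2
    exact h2
  have hXeq : X = ∫⁻ s in Ioc (0:ℝ) t,
      f s ^ 4 * ENNReal.ofReal ((t/s) ^ ((1:ℝ)/12) * s) := by
    apply setLIntegral_congr_fun measurableSet_Ioc
    intro s hs
    have hs0 : 0 < s := hs.1
    have hts : (0:ℝ) ≤ t / s := (div_pos ht hs0).le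
    simp only [hu]
    rw [ENNReal.mul_rpow_of_nonneg _ _ (by norm_num : (0:ℝ) ≤ 4),
      ENNReal.ofReal_rpow_of_nonneg (by positivity) (by norm_num)]
    congr 1
    · rw [show (4:ℝ) = ((4:ℕ):ℝ) by norm_num, ENNReal.rpow_natCast]
    · congr 1
      rw [Real.mul_rpow (Real.rpow_nonneg hts _) (Real.rpow_nonneg hs0.le _),
        ← Real.rpow_mul hts, ← Real.rpow_mul hs0.le]
      norm_num [Real.rpow_one]
  have hYeq : Y = ENNReal.ofReal ((12/7) * t ^ ((2:ℝ)/3)) := by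
    have e1 : Y = ∫⁻ s in Ioc (0:ℝ) t,
        ENNReal.ofReal (t ^ ((1:ℝ)/12)) * ENNReal.ofReal (s ^ (-5/12 : ℝ)) := by
      apply setLIntegral_congr_fun measurableSet_Ioc
      intro s hs
      have hs0 : 0 < s := hs.1
      have hts : (0:ℝ) ≤ t / s := (div_pos ht hs0).le
      simp only [hv]
      rw [ENNReal.ofReal_rpow_of_nonneg (by positivity) (by norm_num),
        ← ENNReal.ofReal_mul (Real.rpow_nonneg ht.le _)]
      congr 1
      have ediv : (t/s) ^ ((1:ℝ)/12) = t ^ ((1:ℝ)/12) * s ^ (-((1:ℝ)/12)) := by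
        rw [Real.div_rpow ht.le hs0.le, Real.rpow_neg hs0.le, div_eq_mul_inv]
      rw [Real.mul_rpow (Real.rpow_nonneg hts _) (Real.rpow_nonneg hs0.le _),
        ← Real.rpow_mul hts, ← Real.rpow_mul hs0.le,
        show (1:ℝ)/16 * (4/3) = 1/12 by norm_num,
        show -((1:ℝ)/4) * (4/3) = -(1/3) by norm_num, ediv, mul_assoc,
        ← Real.rpow_add hs0]
      norm_num
    rw [e1, lintegral_const_mul _ (measurable_id'.pow measurable_const).ennreal_ofReal,
      lint_Ioc_rpow (by norm_num) ht,
      ← ENNReal.ofReal_mul (Real.rpow_nonneg ht.le _)]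
    congr 1
    rw [show (-5/12 : ℝ) + 1 = 7/12 by norm_num, div_eq_mul_inv _ ((7:ℝ)/12),
      ← mul_assoc, ← Real.rpow_add ht]
    norm_num
    ring
  have meas1 : Measurable fun s => f s ^ 4 * ENNReal.ofReal ((t/s) ^ ((1:ℝ)/12) * s) :=
    (hf.pow_const 4).mul
      (((measurable_const.div measurable_id).pow measurable_const).mul
        measurable_id).ennreal_ofReal
  have meas2 : Measurable fun s : ℝ =>
      f s ^ 4 * ENNReal.ofReal (t ^ (-23/12 : ℝ) * s ^ (11/12 : ℝ)) :=
    (hf.pow_const 4).mul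
      (measurable_const.mul (measurable_id'.pow measurable_const)).ennreal_ofReal
  have hpt : ∀ s : ℝ, 0 < s →
      ENNReal.ofReal ((t^(4:ℕ))⁻¹ * ((12/7)^3 * t ^ ((2:ℝ)))) *
          (f s ^ 4 * ENNReal.ofReal ((t/s) ^ ((1:ℝ)/12) * s))
        = ENNReal.ofReal ((12/7)^3) *
          (f s ^ 4 * ENNReal.ofReal (t ^ (-23/12 : ℝ) * s ^ (11/12 : ℝ))) := by
    intro s hs0
    calc ENNReal.ofReal ((t^(4:ℕ))⁻¹ * ((12/7)^3 * t ^ ((2:ℝ)))) *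
          (f s ^ 4 * ENNReal.ofReal ((t/s) ^ ((1:ℝ)/12) * s))
        = f s ^ 4 * (ENNReal.ofReal ((t^(4:ℕ))⁻¹ * ((12/7)^3 * t ^ ((2:ℝ)))) *
            ENNReal.ofReal ((t/s) ^ ((1:ℝ)/12) * s)) := by ring
      _ = f s ^ 4 * ENNReal.ofReal ((t^(4:ℕ))⁻¹ * ((12/7)^3 * t ^ ((2:ℝ))) *
            ((t/s) ^ ((1:ℝ)/12) * s)) := by
          rw [← ENNReal.ofReal_mul (by positivity)]
      _ = f s ^ 4 * ENNReal.ofReal ((12/7)^3 * (t ^ (-23/12 : ℝ) * s ^ (11/12 : ℝ))) := by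
          rw [real_id3 ht hs0]
      _ = ENNReal.ofReal ((12/7)^3) *
            (f s ^ 4 * ENNReal.ofReal (t ^ (-23/12 : ℝ) * s ^ (11/12 : ℝ))) := by
          rw [ENNReal.ofReal_mul (by positivity)]
          ring
  calc ((ENNReal.ofReal t)⁻¹ *
        ∫⁻ s in Ioc (0:ℝ) t, f s * ENNReal.ofReal ((t/s) ^ ((1:ℝ)/12))) ^ 4
      ≤ ((ENNReal.ofReal t)⁻¹ * (X ^ ((1:ℝ)/4) * Y ^ ((3:ℝ)/4))) ^ 4 := by
        exact pow_le_pow_left' (mul_le_mul_right hsplit _) 4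
    _ = ((ENNReal.ofReal t)⁻¹) ^ 4 * X * (ENNReal.ofReal ((12/7) * t ^ ((2:ℝ)/3))) ^ 3 := by
        rw [mul_pow, mul_pow, hYeq]
        rw [← ENNReal.rpow_natCast (X ^ ((1:ℝ)/4)) 4, ← ENNReal.rpow_mul,
          ← ENNReal.rpow_natCast ((ENNReal.ofReal ((12/7) * t ^ ((2:ℝ)/3))) ^ ((3:ℝ)/4)) 4,
          ← ENNReal.rpow_mul,
          show (1:ℝ)/4 * (4:ℕ) = 1 by norm_num,
          show (3:ℝ)/4 * (4:ℕ) = ((3:ℕ):ℝ) by norm_num,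
          ENNReal.rpow_one, ENNReal.rpow_natCast, mul_assoc]
    _ = ENNReal.ofReal ((t^(4:ℕ))⁻¹ * ((12/7)^3 * t ^ ((2:ℝ)))) * X := by
        have ha : ((ENNReal.ofReal t)⁻¹)^4 = ENNReal.ofReal (((t:ℝ)^(4:ℕ))⁻¹) := by
          rw [← ENNReal.ofReal_inv_of_pos ht, ← ENNReal.ofReal_pow (by positivity), inv_pow]
        have hb : (ENNReal.ofReal ((12/7) * t ^ ((2:ℝ)/3)))^3
            = ENNReal.ofReal ((12/7)^3 * t ^ ((2:ℝ))) := by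
          rw [← ENNReal.ofReal_pow (by positivity), mul_pow,
            ← Real.rpow_natCast (t ^ ((2:ℝ)/3)) 3, ← Real.rpow_mul ht.le]
          norm_num
        rw [ha, hb, ENNReal.ofReal_mul (show (0:ℝ) ≤ ((t:ℝ)^(4:ℕ))⁻¹ by positivity)]
        ring
    _ = ENNReal.ofReal ((12/7)^3) *
        ∫⁻ s in Ioc (0:ℝ) t, f s ^ 4 * ENNReal.ofReal (t ^ (-23/12 : ℝ) * s ^ (11/12 : ℝ)) := by
        rw [hXeq, ← lintegral_const_mul _ meas1, ← lintegral_const_mul _ meas2]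
        apply setLIntegral_congr_fun measurableSet_Ioc
        exact fun s hs => hpt s hs.1

theorem stmt12 (A : ℝ) (hA : 0 < A) :
    ∃ C > (0:ℝ), ∀ (T : ℝ) (f : ℝ → ℝ≥0∞), 0 < T → Measurable f →
      (∫⁻ t in Ioc (0:ℝ) T, (f t) ^ 4) < ⊤ →
      (∫⁻ t in Ioc (0:ℝ) T,
          ((ENNReal.ofReal t)⁻¹ *
            ∫⁻ s in Ioc (0:ℝ) t,
              f s * ENNReal.ofReal (Real.exp (A * Real.sqrt |Real.log (t / s)|))) ^ 4)
          < ⊤ ∧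
      (∫⁻ t in Ioc (0:ℝ) T,
          ((ENNReal.ofReal t)⁻¹ *
            ∫⁻ s in Ioc (0:ℝ) t,
              f s * ENNReal.ofReal (Real.exp (A * Real.sqrt |Real.log (t / s)|))) ^ 4)
        ≤ ENNReal.ofReal C ^ 4 * ∫⁻ t in Ioc (0:ℝ) T, (f t) ^ 4 := by
  refine ⟨2 * Real.exp (3 * A ^ 2), by positivity, fun T f hT hf hfin => ?_⟩
  set E := ENNReal.ofReal (Real.exp (3 * A ^ 2)) with hE
  have hEne : E ≠ ⊤ := ENNReal.ofReal_ne_top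
  -- Step A + Hölder, pointwise in t
  have key : ∀ t ∈ Ioc (0:ℝ) T,
      ((ENNReal.ofReal t)⁻¹ *
          ∫⁻ s in Ioc (0:ℝ) t,
            f s * ENNReal.ofReal (Real.exp (A * Real.sqrt |Real.log (t / s)|))) ^ 4
        ≤ (E ^ 4 * ENNReal.ofReal ((12/7)^3)) *
          ∫⁻ s in Ioc (0:ℝ) t, f s ^ 4 *
            ENNReal.ofReal (t ^ (-23/12 : ℝ) * s ^ (11/12 : ℝ)) := by
    intro t ht
    have ht0 : 0 < t := ht.1
    have stepA : (∫⁻ s in Ioc (0:ℝ) t,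
          f s * ENNReal.ofReal (Real.exp (A * Real.sqrt |Real.log (t / s)|)))
        ≤ E * ∫⁻ s in Ioc (0:ℝ) t, f s * ENNReal.ofReal ((t/s) ^ ((1:ℝ)/12)) := by
      have meas3 : Measurable fun s : ℝ => f s * ENNReal.ofReal ((t/s) ^ ((1:ℝ)/12)) :=
        hf.mul ((measurable_const.div measurable_id).pow measurable_const).ennreal_ofReal
      rw [← lintegral_const_mul _ meas3]
      apply lintegral_mono_ae
      filter_upwards [ae_restrict_mem measurableSet_Ioc] with s hs
      calc f s * ENNReal.ofReal (Real.exp (A * Real.sqrt |Real.log (t / s)|))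
          ≤ f s * ENNReal.ofReal (Real.exp (3 * A ^ 2) * (t/s) ^ ((1:ℝ)/12)) :=
            mul_le_mul_right (ENNReal.ofReal_le_ofReal (kernel_bd hA hs.1 hs.2)) _
        _ = E * (f s * ENNReal.ofReal ((t/s) ^ ((1:ℝ)/12))) := by
            rw [ENNReal.ofReal_mul (Real.exp_nonneg _)]
            ring
    calc ((ENNReal.ofReal t)⁻¹ *
          ∫⁻ s in Ioc (0:ℝ) t,
            f s * ENNReal.ofReal (Real.exp (A * Real.sqrt |Real.log (t / s)|))) ^ 4
        ≤ ((ENNReal.ofReal t)⁻¹ *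
            (E * ∫⁻ s in Ioc (0:ℝ) t, f s * ENNReal.ofReal ((t/s) ^ ((1:ℝ)/12)))) ^ 4 :=
          pow_le_pow_left' (mul_le_mul_right stepA _) 4
      _ = E ^ 4 * ((ENNReal.ofReal t)⁻¹ *
            ∫⁻ s in Ioc (0:ℝ) t, f s * ENNReal.ofReal ((t/s) ^ ((1:ℝ)/12))) ^ 4 := by
          rw [show (ENNReal.ofReal t)⁻¹ *
              (E * ∫⁻ s in Ioc (0:ℝ) t, f s * ENNReal.ofReal ((t/s) ^ ((1:ℝ)/12)))
            = E * ((ENNReal.ofReal t)⁻¹ *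
              ∫⁻ s in Ioc (0:ℝ) t, f s * ENNReal.ofReal ((t/s) ^ ((1:ℝ)/12))) by ring,
            mul_pow]
      _ ≤ E ^ 4 * (ENNReal.ofReal ((12/7)^3) *
            ∫⁻ s in Ioc (0:ℝ) t, f s ^ 4 *
              ENNReal.ofReal (t ^ (-23/12 : ℝ) * s ^ (11/12 : ℝ))) :=
          mul_le_mul_right (holder_bd f hf ht0) _
      _ = (E ^ 4 * ENNReal.ofReal ((12/7)^3)) *
            ∫⁻ s in Ioc (0:ℝ) t, f s ^ 4 *
              ENNReal.ofReal (t ^ (-23/12 : ℝ) * s ^ (11/12 : ℝ)) := by ring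
  have main : (∫⁻ t in Ioc (0:ℝ) T,
        ((ENNReal.ofReal t)⁻¹ *
          ∫⁻ s in Ioc (0:ℝ) t,
            f s * ENNReal.ofReal (Real.exp (A * Real.sqrt |Real.log (t / s)|))) ^ 4)
      ≤ ENNReal.ofReal (2 * Real.exp (3 * A ^ 2)) ^ 4 * ∫⁻ t in Ioc (0:ℝ) T, f t ^ 4 := by
    calc (∫⁻ t in Ioc (0:ℝ) T,
          ((ENNReal.ofReal t)⁻¹ *
            ∫⁻ s in Ioc (0:ℝ) t,
              f s * ENNReal.ofReal (Real.exp (A * Real.sqrt |Real.log (t / s)|))) ^ 4)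
        ≤ ∫⁻ t in Ioc (0:ℝ) T, (E ^ 4 * ENNReal.ofReal ((12/7)^3)) *
            ∫⁻ s in Ioc (0:ℝ) t, f s ^ 4 *
              ENNReal.ofReal (t ^ (-23/12 : ℝ) * s ^ (11/12 : ℝ)) := by
          apply lintegral_mono_ae
          filter_upwards [ae_restrict_mem measurableSet_Ioc] with t ht
          exact key t ht
      _ = (E ^ 4 * ENNReal.ofReal ((12/7)^3)) * ∫⁻ t in Ioc (0:ℝ) T,
            ∫⁻ s in Ioc (0:ℝ) t, f s ^ 4 *
              ENNReal.ofReal (t ^ (-23/12 : ℝ) * s ^ (11/12 : ℝ)) :=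
          lintegral_const_mul' _ _
            (ENNReal.mul_ne_top (ENNReal.pow_ne_top hEne) ENNReal.ofReal_ne_top)
      _ ≤ (E ^ 4 * ENNReal.ofReal ((12/7)^3)) *
            (ENNReal.ofReal (12/11) * ∫⁻ s in Ioc (0:ℝ) T, f s ^ 4) :=
          mul_le_mul_right (swap_bd hT f hf) _
      _ = (E ^ 4 * (ENNReal.ofReal ((12/7)^3) * ENNReal.ofReal (12/11))) *
            ∫⁻ s in Ioc (0:ℝ) T, f s ^ 4 := by ring
      _ ≤ (E ^ 4 * ENNReal.ofReal 16) * ∫⁻ s in Ioc (0:ℝ) T, f s ^ 4 := by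
          apply mul_le_mul_left
          apply mul_le_mul_right
          rw [← ENNReal.ofReal_mul (by positivity)]
          apply ENNReal.ofReal_le_ofReal
          norm_num
      _ = ENNReal.ofReal (2 * Real.exp (3 * A ^ 2)) ^ 4 * ∫⁻ t in Ioc (0:ℝ) T, f t ^ 4 := by
          congr 1
          have h16 : ENNReal.ofReal 16 = ENNReal.ofReal 2 ^ 4 := by
            rw [← ENNReal.ofReal_pow (by norm_num)]; norm_num
          rw [h16, ENNReal.ofReal_mul (by norm_num : (0:ℝ) ≤ 2), mul_pow, hE,
            ← ENNReal.ofReal_pow (Real.exp_nonneg _)]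
          ring
  refine ⟨lt_of_le_of_lt main ?_, main⟩
  exact ENNReal.mul_lt_top (ENNReal.pow_lt_top (ENNReal.ofReal_lt_top)) hfin
end
end

section
/- There is a universal constant C such that: for every C² function f on 𝕋 × ℝ with zero horizontal average (i.e. ∫_𝕋 f(x₁,x₂) dx₁ = 0 for every x₂ ∈ ℝ) and with ∂₁f, ∂₁∂₂f ∈ L²(𝕋 × ℝ), one has the anisotropic Agmon-type inequality ‖f‖_{L^∞(𝕋×ℝ)} ≤ C ‖∂₁f‖_{L²(𝕋×ℝ)}^{1/2} ‖∂₁∂₂f‖_{L²(𝕋×ℝ)}^{1/2}. -/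
/- STATEMENT 16: Anisotropic Agmon-type inequality: there is a universal constant C
such that every C² function f on 𝕋 × ℝ with zero horizontal average and
∂₁f, ∂₁∂₂f ∈ L² satisfies ‖f‖_{L^∞} ≤ C ‖∂₁f‖_{L²}^{1/2} ‖∂₁∂₂f‖_{L²}^{1/2}.
Functions on 𝕋 × ℝ are represented by 1-periodic functions in the first variable,
with μΩ = volume restricted to [0,1) × ℝ. -/

noncomputable section

open MeasureTheory Set
open scoped ENNReal

abbrev Pt : Type := ℝ × ℝ

/-- partial derivative in the first (torus) variable -/
def pd1 (f : Pt → ℝ) (x : Pt) : ℝ := deriv (fun s => f (s, x.2)) x.1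

/-- partial derivative in the second (real) variable -/
def pd2 (f : Pt → ℝ) (x : Pt) : ℝ := deriv (fun s => f (x.1, s)) x.2

/-- 1-periodicity in the first variable: represents functions on 𝕋 × ℝ, 𝕋 = ℝ/ℤ -/
def Per (f : Pt → ℝ) : Prop := ∀ x : Pt, f (x.1 + 1, x.2) = f x

/-- the measure representing 𝕋 × ℝ -/
def μΩ : Measure Pt := volume.restrict (Set.Ico (0:ℝ) 1 ×ˢ Set.univ)



lemma hasDerivAt_line1 {g : Pt → ℝ} {a b : ℝ} (hg : DifferentiableAt ℝ g (a, b)) :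
    HasDerivAt (fun s => g (s, b)) (fderiv ℝ g (a, b) (1, 0)) a := by
  have h1 : HasDerivAt (fun s : ℝ => ((s, b) : Pt)) ((1 : ℝ), (0 : ℝ)) a :=
    (hasDerivAt_id a).prodMk (hasDerivAt_const a b)
  exact hg.hasFDerivAt.comp_hasDerivAt a h1

lemma hasDerivAt_line2 {g : Pt → ℝ} {a b : ℝ} (hg : DifferentiableAt ℝ g (a, b)) :
    HasDerivAt (fun s => g (a, s)) (fderiv ℝ g (a, b) (0, 1)) b := by
  have h1 : HasDerivAt (fun s : ℝ => ((a, s) : Pt)) ((0 : ℝ), (1 : ℝ)) b :=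
    (hasDerivAt_const b a).prodMk (hasDerivAt_id b)
  exact hg.hasFDerivAt.comp_hasDerivAt b h1

lemma pd1_eq {g : Pt → ℝ} {z : Pt} (hg : DifferentiableAt ℝ g z) :
    pd1 g z = fderiv ℝ g z (1, 0) := by
  have := hasDerivAt_line1 (a := z.1) (b := z.2) (by simpa using hg)
  simpa [pd1] using this.deriv

lemma pd2_eq {g : Pt → ℝ} {z : Pt} (hg : DifferentiableAt ℝ g z) :
    pd2 g z = fderiv ℝ g z (0, 1) := by
  have := hasDerivAt_line2 (a := z.1) (b := z.2) (by simpa using hg)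
  simpa [pd2] using this.deriv

section Calc
variable {f : Pt → ℝ}

lemma pd1_eq' (hf : ContDiff ℝ 2 f) (z : Pt) : pd1 f z = fderiv ℝ f z (1, 0) :=
  pd1_eq (hf.differentiable two_ne_zero).differentiableAt

lemma contDiff_fderiv (hf : ContDiff ℝ 2 f) : ContDiff ℝ 1 (fderiv ℝ f) :=
  hf.fderiv_right (by norm_num)

lemma pd2_diff (hf : ContDiff ℝ 2 f) (z : Pt) : DifferentiableAt ℝ (fun w => pd2 f w) z := by
  have h2 : (fun w => pd2 f w) = fun w =>
      (ContinuousLinearMap.apply ℝ ℝ ((0 : ℝ), (1 : ℝ))) (fderiv ℝ f w) := by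
    funext w
    simp [pd2_eq (hf.differentiable two_ne_zero).differentiableAt,
      ContinuousLinearMap.apply]
  rw [h2]
  exact (ContinuousLinearMap.apply ℝ ℝ ((0:ℝ),(1:ℝ))).differentiable.differentiableAt.comp z
    ((contDiff_fderiv hf).differentiable one_ne_zero).differentiableAt

lemma pd1_pd2_eq (hf : ContDiff ℝ 2 f) (z : Pt) :
    pd1 (fun w => pd2 f w) z = fderiv ℝ (fderiv ℝ f) z (1, 0) (0, 1) := by
  have h2 : (fun w => pd2 f w) = fun w =>
      (ContinuousLinearMap.apply ℝ ℝ ((0 : ℝ), (1 : ℝ))) (fderiv ℝ f w) := by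
    funext w
    simp [pd2_eq (hf.differentiable two_ne_zero).differentiableAt,
      ContinuousLinearMap.apply]
  rw [pd1_eq (pd2_diff hf z), h2]
  have hD : HasFDerivAt (fun w => (ContinuousLinearMap.apply ℝ ℝ ((0:ℝ),(1:ℝ))) (fderiv ℝ f w))
      ((ContinuousLinearMap.apply ℝ ℝ ((0:ℝ),(1:ℝ))).comp (fderiv ℝ (fderiv ℝ f) z)) z :=
    (ContinuousLinearMap.apply ℝ ℝ ((0:ℝ),(1:ℝ))).hasFDerivAt.comp z
      ((contDiff_fderiv hf).differentiable one_ne_zero).differentiableAt.hasFDerivAt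
  rw [hD.fderiv]
  simp [ContinuousLinearMap.apply]

/-- key: derivative in second variable of pd1 f equals pd1 (pd2 f), by symmetry -/
lemma key_hasDerivAt (hf : ContDiff ℝ 2 f) (t y : ℝ) :
    HasDerivAt (fun s => pd1 f (t, s)) (pd1 (fun w => pd2 f w) (t, y)) y := by
  have h1 : (fun s => pd1 f (t, s)) = fun s =>
      (ContinuousLinearMap.apply ℝ ℝ ((1 : ℝ), (0 : ℝ))) (fderiv ℝ f (t, s)) := by
    funext s
    simp [pd1_eq' hf, ContinuousLinearMap.apply]
  rw [h1]
  have hD : HasFDerivAt (fun w => (ContinuousLinearMap.apply ℝ ℝ ((1:ℝ),(0:ℝ))) (fderiv ℝ f w))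
      ((ContinuousLinearMap.apply ℝ ℝ ((1:ℝ),(0:ℝ))).comp (fderiv ℝ (fderiv ℝ f) (t, y))) (t, y) :=
    (ContinuousLinearMap.apply ℝ ℝ ((1:ℝ),(0:ℝ))).hasFDerivAt.comp (t, y)
      ((contDiff_fderiv hf).differentiable one_ne_zero).differentiableAt.hasFDerivAt
  have h2 : HasDerivAt (fun s : ℝ => ((t, s) : Pt)) ((0 : ℝ), (1 : ℝ)) y :=
    (hasDerivAt_const y t).prodMk (hasDerivAt_id y)
  have := hD.comp_hasDerivAt y h2
  have hsymm := (hf.contDiffAt (x := ((t, y) : Pt))).isSymmSndFDerivAt (by norm_num)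
  rw [pd1_pd2_eq hf, ← hsymm (0,1) (1,0)]
  simpa [ContinuousLinearMap.apply, Function.comp_def] using this

lemma continuous_pd1 (hf : ContDiff ℝ 2 f) : Continuous (fun z => pd1 f z) := by
  have h1 : (fun z => pd1 f z) = fun z =>
      (ContinuousLinearMap.apply ℝ ℝ ((1 : ℝ), (0 : ℝ))) (fderiv ℝ f z) := by
    funext z; simp [pd1_eq' hf, ContinuousLinearMap.apply]
  rw [h1]
  exact (ContinuousLinearMap.apply ℝ ℝ ((1:ℝ),(0:ℝ))).continuous.comp
    ((contDiff_fderiv hf).continuous)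

lemma continuous_pd1_pd2 (hf : ContDiff ℝ 2 f) : Continuous (fun z => pd1 (fun w => pd2 f w) z) := by
  have h1 : (fun z => pd1 (fun w => pd2 f w) z) = fun z =>
      (ContinuousLinearMap.apply ℝ ℝ ((0 : ℝ), (1 : ℝ)))
        ((ContinuousLinearMap.apply ℝ (Pt →L[ℝ] ℝ) ((1 : ℝ), (0 : ℝ)))
          (fderiv ℝ (fderiv ℝ f) z)) := by
    funext z; simp [pd1_pd2_eq hf, ContinuousLinearMap.apply]
  rw [h1]
  exact (ContinuousLinearMap.apply ℝ ℝ ((0:ℝ),(1:ℝ))).continuous.comp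
    ((ContinuousLinearMap.apply ℝ (Pt →L[ℝ] ℝ) ((1:ℝ),(0:ℝ))).continuous.comp
      ((contDiff_fderiv hf).continuous_fderiv one_ne_zero))

end Calc




lemma muOmega_eq : μΩ = (volume.restrict (Ico (0:ℝ) 1)).prod (volume : Measure ℝ) := by
  rw [μΩ, Measure.volume_eq_prod, ← Measure.prod_restrict, Measure.restrict_univ]

instance : IsFiniteMeasure (volume.restrict (Ico (0:ℝ) 1)) :=
  ⟨by simp⟩


lemma intOn_Ico {g : Pt → ℝ} (hg : Continuous g) (w : ℝ) :
    IntegrableOn (fun t => g (t, w)) (Ico (0:ℝ) 1) volume :=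
  ((hg.comp (continuous_id.prodMk continuous_const)).integrableOn_Icc).mono_set
    Ico_subset_Icc_self

lemma step_ftc (u v : Pt → ℝ) (hu : Continuous u) (hv : Continuous v)
    (hkey : ∀ t s : ℝ, HasDerivAt (fun r => u (t, r)) (v (t, s)) s)
    {b y : ℝ} (hby : b ≤ y) :
    (∫ t in Ico (0:ℝ) 1, u (t, y) ^ 2) - (∫ t in Ico (0:ℝ) 1, u (t, b) ^ 2)
      = ∫ s in Ioc b y, (∫ t in Ico (0:ℝ) 1, 2 * u (t, s) * v (t, s)) := by
  have hD : Continuous (fun z : Pt => 2 * u z * v z) := by fun_prop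
  have hptw : ∀ t : ℝ, u (t, y) ^ 2 - u (t, b) ^ 2
      = ∫ s in Ioc b y, 2 * u (t, s) * v (t, s) := by
    intro t
    have h1 : ∀ s ∈ uIcc b y, HasDerivAt (fun r => u (t, r) ^ 2) (2 * u (t, s) * v (t, s)) s := by
      intro s _
      simpa using (hkey t s).fun_pow 2
    have h2 : IntervalIntegrable (fun s => 2 * u (t, s) * v (t, s)) volume b y :=
      (hD.comp (continuous_const.prodMk continuous_id)).intervalIntegrable b y
    have := intervalIntegral.integral_eq_sub_of_hasDerivAt h1 h2
    rw [intervalIntegral.integral_of_le hby] at this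
    exact this.symm
  have hsub := integral_sub (μ := volume.restrict (Ico (0:ℝ) 1))
    (intOn_Ico (g := fun z : Pt => u z ^ 2) (by fun_prop) y)
    (intOn_Ico (g := fun z : Pt => u z ^ 2) (by fun_prop) b)
  rw [← hsub, show (fun t => u (t, y) ^ 2 - u (t, b) ^ 2)
      = fun t => ∫ s in Ioc b y, 2 * u (t, s) * v (t, s) from funext hptw]
  -- swap
  have hswap := MeasureTheory.integral_integral_swap
    (μ := volume.restrict (Ico (0:ℝ) 1)) (ν := volume.restrict (Ioc b y))
    (f := fun t s => 2 * u (t, s) * v (t, s)) ?_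
  · exact hswap
  · have h0 : IntegrableOn (fun z : Pt => 2 * u z * v z) (Ico (0:ℝ) 1 ×ˢ Ioc b y) volume := by
      refine IntegrableOn.mono_set (t := (Icc (0:ℝ) 1) ×ˢ (Icc b y))
        ((hD.continuousOn).integrableOn_compact (isCompact_Icc.prod isCompact_Icc)) ?_
      exact Set.prod_mono Ico_subset_Icc_self Ioc_subset_Icc_self
    rw [IntegrableOn, Measure.volume_eq_prod, ← Measure.prod_restrict] at h0
    exact h0

lemma cs_sqrt {α : Type*} [MeasurableSpace α] (μ : Measure α) (f g : α → ℝ)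
    (hfn : ∀ a, 0 ≤ f a) (hgn : ∀ a, 0 ≤ g a)
    (hf : MemLp f 2 μ) (hg : MemLp g 2 μ) :
    ∫ a, f a * g a ∂μ ≤ Real.sqrt (∫ a, f a ^ 2 ∂μ) * Real.sqrt (∫ a, g a ^ 2 ∂μ) := by
  have hpq : Real.HolderConjugate 2 2 := Real.HolderConjugate.two_two
  have h2 : ENNReal.ofReal (2:ℝ) = 2 := by norm_num
  have h := integral_mul_le_Lp_mul_Lq_of_nonneg hpq (ae_of_all _ hfn) (ae_of_all _ hgn)
    (by rwa [h2]) (by rwa [h2])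
  have hrw : ∀ (h : α → ℝ), (∫ a, h a ^ (2:ℝ) ∂μ) = ∫ a, h a ^ (2:ℕ) ∂μ := by
    intro h
    congr 1; funext a
    rw [show ((2:ℝ)) = ((2:ℕ):ℝ) by norm_num, Real.rpow_natCast]
  rw [hrw f, hrw g] at h
  calc ∫ a, f a * g a ∂μ
      ≤ (∫ a, f a ^ 2 ∂μ) ^ ((1:ℝ)/2) * (∫ a, g a ^ 2 ∂μ) ^ ((1:ℝ)/2) := h
    _ = _ := by
        rw [Real.sqrt_eq_rpow, Real.sqrt_eq_rpow]

lemma memLp_two_restrict {g : ℝ → ℝ} (hg : Continuous g) :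
    MemLp g 2 (volume.restrict (Ico (0:ℝ) 1)) := by
  obtain ⟨C, hC⟩ :=
    (isCompact_Icc (a := (0:ℝ)) (b := 1)).exists_bound_of_continuousOn hg.continuousOn
  have htop : MemLp g ⊤ (volume.restrict (Ico (0:ℝ) 1)) :=
    memLp_top_of_bound hg.aestronglyMeasurable.restrict C
      ((ae_restrict_iff' measurableSet_Ico).2 (ae_of_all _ fun t ht => hC t (Ico_subset_Icc_self ht)))
  exact htop.mono_exponent le_top

lemma step_csH (u v : Pt → ℝ) (hu : Continuous u) (hv : Continuous v) (s : ℝ) :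
    |∫ t in Ico (0:ℝ) 1, 2 * u (t, s) * v (t, s)|
      ≤ 2 * Real.sqrt (∫ t in Ico (0:ℝ) 1, u (t, s) ^ 2)
        * Real.sqrt (∫ t in Ico (0:ℝ) 1, v (t, s) ^ 2) := by
  have hus : Continuous (fun t => u (t, s)) := hu.comp (continuous_id.prodMk continuous_const)
  have hvs : Continuous (fun t => v (t, s)) := hv.comp (continuous_id.prodMk continuous_const)
  have h1 : |∫ t in Ico (0:ℝ) 1, 2 * u (t, s) * v (t, s)|
      ≤ ∫ t in Ico (0:ℝ) 1, |2 * u (t, s) * v (t, s)| :=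
    by simpa only [Real.norm_eq_abs] using
      norm_integral_le_integral_norm (μ := volume.restrict (Ico (0:ℝ) 1))
        (f := fun t => 2 * u (t, s) * v (t, s))
  have h2 : (∫ t in Ico (0:ℝ) 1, |2 * u (t, s) * v (t, s)|)
      = 2 * ∫ t in Ico (0:ℝ) 1, |u (t, s)| * |v (t, s)| := by
    rw [← integral_const_mul]
    congr 1; funext t
    rw [abs_mul, abs_mul]
    simp [mul_assoc, abs_of_nonneg]
  have h3 := cs_sqrt (volume.restrict (Ico (0:ℝ) 1)) (fun t => |u (t, s)|) (fun t => |v (t, s)|)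
    (fun a => abs_nonneg _) (fun a => abs_nonneg _)
    (memLp_two_restrict hus.abs) (memLp_two_restrict hvs.abs)
  simp only [sq_abs] at h3
  calc |∫ t in Ico (0:ℝ) 1, 2 * u (t, s) * v (t, s)|
      ≤ ∫ t in Ico (0:ℝ) 1, |2 * u (t, s) * v (t, s)| := h1
    _ = 2 * ∫ t in Ico (0:ℝ) 1, |u (t, s)| * |v (t, s)| := h2
    _ ≤ 2 * (Real.sqrt (∫ t in Ico (0:ℝ) 1, u (t, s) ^ 2)
        * Real.sqrt (∫ t in Ico (0:ℝ) 1, v (t, s) ^ 2)) := by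
        apply mul_le_mul_of_nonneg_left h3 (by norm_num)
    _ = _ := by ring

lemma step_pointwise (f : Pt → ℝ) (u : Pt → ℝ) (hfc : Continuous f) (hu : Continuous u)
    (hder : ∀ (t y : ℝ), HasDerivAt (fun r => f (r, y)) (u (t, y)) t)
    (hmean : ∀ y : ℝ, (∫ s in (0:ℝ)..1, f (s, y)) = 0) {x : ℝ} (y : ℝ) (hx : x ∈ Icc (0:ℝ) 1) :
    |f (x, y)| ≤ Real.sqrt (∫ t in Ico (0:ℝ) 1, (u (t, y)) ^ 2) := by
  set c : ℝ := ∫ t in Icc (0:ℝ) 1, |u (t, y)| with hc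
  have huy : Continuous (fun t => u (t, y)) := hu.comp (continuous_id.prodMk continuous_const)
  have hfy : Continuous (fun t => f (t, y)) := hfc.comp (continuous_id.prodMk continuous_const)
  have hintabs : IntegrableOn (fun t => |u (t, y)|) (Icc (0:ℝ) 1) volume :=
    huy.abs.integrableOn_Icc
  have habs : ∀ s ∈ Icc (0:ℝ) 1, |f (x, y) - f (s, y)| ≤ c := by
    intro s hs
    have hftc : ∫ t in s..x, u (t, y) = f (x, y) - f (s, y) :=
      intervalIntegral.integral_eq_sub_of_hasDerivAt (fun t _ => hder t y)
        (huy.intervalIntegrable s x)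
    rw [← hftc]
    calc |∫ t in s..x, u (t, y)| ≤ ∫ t in Set.uIoc s x, |u (t, y)| := by
          simpa [Real.norm_eq_abs] using
            intervalIntegral.norm_integral_le_integral_norm_uIoc
              (f := fun t => u (t, y)) (a := s) (b := x) (μ := volume)
      _ ≤ c := by
          apply setIntegral_mono_set hintabs (ae_of_all _ fun t => abs_nonneg _)
          apply HasSubset.Subset.eventuallyLE
          rw [uIoc_eq_union]
          rintro t (ht | ht)
          · exact ⟨le_trans hs.1 (le_of_lt ht.1), le_trans ht.2 hx.2⟩
          · exact ⟨le_trans hx.1 (le_of_lt ht.1), le_trans ht.2 hs.2⟩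
  have hrepr : f (x, y) = ∫ s in (0:ℝ)..1, (f (x, y) - f (s, y)) := by
    rw [intervalIntegral.integral_sub (intervalIntegrable_const) (hfy.intervalIntegrable 0 1),
      hmean y, intervalIntegral.integral_const]
    simp
  have h1 : |f (x, y)| ≤ c := by
    rw [hrepr]
    calc |∫ s in (0:ℝ)..1, (f (x, y) - f (s, y))|
        ≤ ∫ s in Set.uIoc (0:ℝ) 1, |f (x, y) - f (s, y)| := by
          simpa [Real.norm_eq_abs] using
            intervalIntegral.norm_integral_le_integral_norm_uIoc
              (f := fun s => f (x, y) - f (s, y)) (a := (0:ℝ)) (b := 1) (μ := volume)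
      _ = ∫ s in Ioc (0:ℝ) 1, |f (x, y) - f (s, y)| := by
          rw [uIoc_of_le (by norm_num : (0:ℝ) ≤ 1)]
      _ ≤ ∫ s in Ioc (0:ℝ) 1, c := by
          apply setIntegral_mono_on
          · have : Continuous (fun s => |f (x, y) - f (s, y)|) :=
              by fun_prop
            exact this.integrableOn_Icc.mono_set Ioc_subset_Icc_self
          · exact integrableOn_const (by simp)
          · exact measurableSet_Ioc
          · exact fun s hs => habs s (Ioc_subset_Icc_self hs)
      _ = c := by simp
  refine h1.trans ?_
  -- Cauchy-Schwarz with g = 1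
  have h2 := cs_sqrt (volume.restrict (Ico (0:ℝ) 1)) (fun t => |u (t, y)|) (fun _ => 1)
    (fun _ => abs_nonneg _) (fun _ => zero_le_one) (memLp_two_restrict huy.abs)
    (memLp_two_restrict continuous_const)
  simp only [mul_one, sq_abs, one_pow] at h2
  have h3 : (∫ (_ : ℝ) in Ico (0:ℝ) 1, (1:ℝ)) = 1 := by simp
  rw [h3, Real.sqrt_one, mul_one] at h2
  calc c = ∫ t in Ico (0:ℝ) 1, |u (t, y)| := by rw [hc, integral_Icc_eq_integral_Ico]
    _ ≤ _ := h2


theorem stmt16 :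
    ∃ C > (0:ℝ), ∀ f : Pt → ℝ, ContDiff ℝ 2 f → Per f →
      (∀ y : ℝ, (∫ s in (0:ℝ)..1, f (s, y)) = 0) →
      MemLp (fun x => pd1 f x) 2 μΩ →
      MemLp (fun x => pd1 (fun z => pd2 f z) x) 2 μΩ →
      eLpNorm f ⊤ μΩ ≤ ENNReal.ofReal C
        * eLpNorm (fun x => pd1 f x) 2 μΩ ^ (1/2 : ℝ)
        * eLpNorm (fun x => pd1 (fun z => pd2 f z) x) 2 μΩ ^ (1/2 : ℝ) := by
  refine ⟨2, two_pos, ?_⟩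
  intro f hf hper hmean hu2 hv2
  set u : Pt → ℝ := fun z => pd1 f z with hu_def
  set v : Pt → ℝ := fun z => pd1 (fun w => pd2 f w) z with hv_def
  have hu : Continuous u := continuous_pd1 hf
  have hv : Continuous v := continuous_pd1_pd2 hf
  have hfc : Continuous f := hf.continuous
  -- integrability of squares on the strip
  have hiu : Integrable (fun z => u z ^ 2) μΩ := hu2.integrable_sq
  have hiv : Integrable (fun z => v z ^ 2) μΩ := hv2.integrable_sq
  set Gu : ℝ → ℝ := fun y => ∫ t in Ico (0:ℝ) 1, u (t, y) ^ 2 with hGu_def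
  set Gv : ℝ → ℝ := fun y => ∫ t in Ico (0:ℝ) 1, v (t, y) ^ 2 with hGv_def
  set IGu : ℝ := ∫ z, u z ^ 2 ∂μΩ with hIGu_def
  set IGv : ℝ := ∫ z, v z ^ 2 ∂μΩ with hIGv_def
  have hGu_nn : ∀ y, 0 ≤ Gu y := fun y => integral_nonneg fun t => sq_nonneg _
  have hGv_nn : ∀ y, 0 ≤ Gv y := fun y => integral_nonneg fun t => sq_nonneg _
  have hIGu_nn : 0 ≤ IGu := integral_nonneg fun z => sq_nonneg _
  have hIGv_nn : 0 ≤ IGv := integral_nonneg fun z => sq_nonneg _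
  have hiu' : Integrable (fun z => u z ^ 2) ((volume.restrict (Ico (0:ℝ) 1)).prod volume) := by
    rwa [muOmega_eq] at hiu
  have hiv' : Integrable (fun z => v z ^ 2) ((volume.restrict (Ico (0:ℝ) 1)).prod volume) := by
    rwa [muOmega_eq] at hiv
  have hGuInt : Integrable Gu volume := hiu'.integral_prod_right
  have hGvInt : Integrable Gv volume := hiv'.integral_prod_right
  have hIGu_eq : ∫ y, Gu y = IGu := by
    rw [hIGu_def, muOmega_eq]
    exact (integral_prod_symm _ hiu').symm
  have hIGv_eq : ∫ y, Gv y = IGv := by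
    rw [hIGv_def, muOmega_eq]
    exact (integral_prod_symm _ hiv').symm
  -- H and its integrability
  set H : ℝ → ℝ := fun s => ∫ t in Ico (0:ℝ) 1, 2 * u (t, s) * v (t, s) with hH_def
  have hDcont : Continuous (fun z : Pt => 2 * u z * v z) := by fun_prop
  have hDint : Integrable (fun z : Pt => 2 * u z * v z) μΩ := by
    refine Integrable.mono' (hiu.add hiv) hDcont.aestronglyMeasurable (ae_of_all _ fun z => ?_)
    have h1 : ‖2 * u z * v z‖ = 2 * |u z| * |v z| := by
      rw [Real.norm_eq_abs, abs_mul, abs_mul]; simp [abs_of_nonneg]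
    rw [h1]
    simp only [Pi.add_apply]
    nlinarith [sq_nonneg (|u z| - |v z|), sq_abs (u z), sq_abs (v z)]
  have hH_int : Integrable H volume := by
    have := hDint
    rw [muOmega_eq] at this
    exact this.integral_prod_right
  -- pointwise Cauchy-Schwarz bound on H
  have hHb : ∀ s, |H s| ≤ 2 * Real.sqrt (Gu s) * Real.sqrt (Gv s) := fun s =>
    step_csH u v hu hv s
  -- integral bound on |H|
  set IH : ℝ := ∫ s, |H s| with hIH_def
  have hsqGu : MemLp (fun s => Real.sqrt (Gu s)) 2 (volume : Measure ℝ) := by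
    rw [memLp_two_iff_integrable_sq
      (Real.continuous_sqrt.comp_aestronglyMeasurable hGuInt.aestronglyMeasurable)]
    exact hGuInt.congr (ae_of_all _ fun s => (Real.sq_sqrt (hGu_nn s)).symm)
  have hsqGv : MemLp (fun s => Real.sqrt (Gv s)) 2 (volume : Measure ℝ) := by
    rw [memLp_two_iff_integrable_sq
      (Real.continuous_sqrt.comp_aestronglyMeasurable hGvInt.aestronglyMeasurable)]
    exact hGvInt.congr (ae_of_all _ fun s => (Real.sq_sqrt (hGv_nn s)).symm)
  have hcs2 := cs_sqrt (volume : Measure ℝ) (fun s => Real.sqrt (Gu s))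
    (fun s => Real.sqrt (Gv s)) (fun _ => Real.sqrt_nonneg _) (fun _ => Real.sqrt_nonneg _)
    hsqGu hsqGv
  have hsq_rw : (∫ s, Real.sqrt (Gu s) ^ 2) = ∫ y, Gu y :=
    integral_congr_ae (ae_of_all _ fun s => Real.sq_sqrt (hGu_nn s))
  have hsq_rw' : (∫ s, Real.sqrt (Gv s) ^ 2) = ∫ y, Gv y :=
    integral_congr_ae (ae_of_all _ fun s => Real.sq_sqrt (hGv_nn s))
  rw [hsq_rw, hsq_rw', hIGu_eq, hIGv_eq] at hcs2
  have hprod_int : Integrable (fun s => 2 * (Real.sqrt (Gu s) * Real.sqrt (Gv s))) volume := by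
    refine Integrable.mono' (hGuInt.add hGvInt) ?_ (ae_of_all _ fun s => ?_)
    · exact (((Real.continuous_sqrt.comp_aestronglyMeasurable hGuInt.aestronglyMeasurable).mul
        (Real.continuous_sqrt.comp_aestronglyMeasurable hGvInt.aestronglyMeasurable)).const_mul 2)
    · have h0 : (0:ℝ) ≤ Real.sqrt (Gu s) * Real.sqrt (Gv s) :=
        mul_nonneg (Real.sqrt_nonneg _) (Real.sqrt_nonneg _)
      rw [Real.norm_eq_abs, abs_of_nonneg (by positivity)]
      simp only [Pi.add_apply]
      nlinarith [sq_nonneg (Real.sqrt (Gu s) - Real.sqrt (Gv s)), Real.sq_sqrt (hGu_nn s),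
        Real.sq_sqrt (hGv_nn s)]
  have hIH_le : IH ≤ 2 * (Real.sqrt IGu * Real.sqrt IGv) := by
    have h1 : IH ≤ ∫ s, 2 * (Real.sqrt (Gu s) * Real.sqrt (Gv s)) := by
      rw [hIH_def]
      refine integral_mono hH_int.abs hprod_int fun s => ?_
      have := hHb s
      linarith [this]
    have h2 : (∫ s, 2 * (Real.sqrt (Gu s) * Real.sqrt (Gv s)))
        = 2 * ∫ s, Real.sqrt (Gu s) * Real.sqrt (Gv s) := integral_const_mul 2 _
    rw [h2] at h1
    refine h1.trans ?_
    exact mul_le_mul_of_nonneg_left hcs2 (by norm_num)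
  -- the FTC identity and the sup bound on Gu
  have hkey : ∀ t s : ℝ, HasDerivAt (fun r => u (t, r)) (v (t, s)) s := fun t s =>
    key_hasDerivAt hf t s
  have hftc : ∀ {b y : ℝ}, b ≤ y → Gu y - Gu b = ∫ s in Ioc b y, H s := fun {b y} hby =>
    step_ftc u v hu hv hkey hby
  have hIocH : ∀ b y : ℝ, |∫ s in Ioc b y, H s| ≤ IH := by
    intro b y
    calc |∫ s in Ioc b y, H s| ≤ ∫ s in Ioc b y, |H s| := by
          simpa [Real.norm_eq_abs] using
            norm_integral_le_integral_norm (μ := volume.restrict (Ioc b y)) H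
      _ ≤ IH := setIntegral_le_integral hH_int.abs (ae_of_all _ fun s => abs_nonneg _)
  have hGu_le : ∀ y, Gu y ≤ IH := by
    intro y
    refine le_of_forall_pos_le_add fun ε hε => ?_
    -- find b with Gu b < ε
    have hex : ∃ b, Gu b < ε := by
      by_contra hcon
      push_neg at hcon
      have hconst : Integrable (fun _ : ℝ => ε) volume := by
        refine hGuInt.mono' aestronglyMeasurable_const (ae_of_all _ fun b => ?_)
        rw [Real.norm_eq_abs, abs_of_pos hε]
        exact hcon b
      rw [integrable_const_iff] at hconst
      rcases hconst with h | h
      · exact hε.ne' h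
      · exact absurd (@measure_lt_top _ _ _ h univ) (by simp)
    obtain ⟨b, hb⟩ := hex
    rcases le_total b y with hby | hyb
    · have := hftc hby
      have h2 := hIocH b y
      have : Gu y = Gu b + ∫ s in Ioc b y, H s := by linarith [this]
      rw [this]
      have := abs_le.1 h2
      linarith [this.2]
    · have := hftc hyb
      have h2 := hIocH y b
      have h3 : Gu y = Gu b - ∫ s in Ioc y b, H s := by linarith [this]
      rw [h3]
      have := abs_le.1 h2
      linarith [this.1]
  -- pointwise bound on f
  set M : ℝ := Real.sqrt (2 * (Real.sqrt IGu * Real.sqrt IGv)) with hM_def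
  have hder : ∀ t y : ℝ, HasDerivAt (fun r => f (r, y)) (u (t, y)) t := by
    intro t y
    have h1 := hasDerivAt_line1 (g := f) (a := t) (b := y)
      (hf.differentiable two_ne_zero).differentiableAt
    rwa [← pd1_eq' hf (t, y)] at h1
  have hpt : ∀ z : Pt, z ∈ Ico (0:ℝ) 1 ×ˢ (univ : Set ℝ) → ‖f z‖ ≤ M := by
    rintro ⟨x, y⟩ hz
    have hx : x ∈ Icc (0:ℝ) 1 := Ico_subset_Icc_self hz.1
    have h1 := step_pointwise f u hfc hu hder hmean y hx
    rw [Real.norm_eq_abs]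
    refine h1.trans ?_
    rw [hM_def]
    exact Real.sqrt_le_sqrt ((hGu_le y).trans hIH_le)
  -- conclude on the essential sup
  have hsup : eLpNorm f ⊤ μΩ ≤ ENNReal.ofReal M := by
    have hb : ∀ᵐ z ∂μΩ, ‖f z‖ ≤ M := by
      rw [μΩ]
      exact (ae_restrict_iff' (measurableSet_Ico.prod MeasurableSet.univ)).2
        (ae_of_all _ hpt)
    have := eLpNorm_le_of_ae_bound (p := (⊤ : ℝ≥0∞)) (μ := μΩ) hb
    simpa using this
  refine hsup.trans ?_
  -- compute the L² norms
  have hnorm : ∀ (g : Pt → ℝ), MemLp g 2 μΩ →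
      eLpNorm g 2 μΩ = ENNReal.ofReal ((∫ z, g z ^ 2 ∂μΩ) ^ ((2:ℝ)⁻¹)) := by
    intro g hg
    rw [hg.eLpNorm_eq_integral_rpow_norm two_ne_zero ENNReal.ofNat_ne_top]
    congr 1
    have h2 : ((2:ℝ≥0∞)).toReal = (2:ℝ) := by simp
    rw [h2]
    have h3 : (∫ z, ‖g z‖ ^ (2:ℝ) ∂μΩ) = ∫ z, g z ^ 2 ∂μΩ := by
      refine integral_congr_ae (ae_of_all _ fun z => ?_)
      show ‖g z‖ ^ (2:ℝ) = g z ^ 2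
      rw [Real.rpow_two]
      simp [sq_abs]
    rw [h3]
  rw [hnorm _ hu2, hnorm _ hv2, ← hIGu_def, ← hIGv_def]
  rw [ENNReal.ofReal_rpow_of_nonneg (Real.rpow_nonneg hIGu_nn _) (by norm_num : (0:ℝ) ≤ 1/2),
    ENNReal.ofReal_rpow_of_nonneg (Real.rpow_nonneg hIGv_nn _) (by norm_num : (0:ℝ) ≤ 1/2)]
  rw [← ENNReal.ofReal_mul (by norm_num), ← ENNReal.ofReal_mul (by positivity)]
  apply ENNReal.ofReal_le_ofReal
  -- final real inequality
  have hru : (IGu ^ ((2:ℝ)⁻¹)) ^ ((1:ℝ)/2) = Real.sqrt (Real.sqrt IGu) := by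
    rw [show ((2:ℝ)⁻¹) = (1:ℝ)/2 by norm_num, ← Real.sqrt_eq_rpow, ← Real.sqrt_eq_rpow]
  have hrv : (IGv ^ ((2:ℝ)⁻¹)) ^ ((1:ℝ)/2) = Real.sqrt (Real.sqrt IGv) := by
    rw [show ((2:ℝ)⁻¹) = (1:ℝ)/2 by norm_num, ← Real.sqrt_eq_rpow, ← Real.sqrt_eq_rpow]
  rw [hru, hrv, hM_def]
  have hs2 : Real.sqrt 2 ≤ 2 := by
    nlinarith [Real.sq_sqrt (by norm_num : (0:ℝ) ≤ 2), Real.sqrt_nonneg 2]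
  have hsplit : Real.sqrt (2 * (Real.sqrt IGu * Real.sqrt IGv))
      = Real.sqrt 2 * (Real.sqrt (Real.sqrt IGu) * Real.sqrt (Real.sqrt IGv)) := by
    rw [Real.sqrt_mul (by norm_num : (0:ℝ) ≤ 2),
      Real.sqrt_mul (Real.sqrt_nonneg _)]
  rw [hsplit]
  have hab : (0:ℝ) ≤ Real.sqrt (Real.sqrt IGu) * Real.sqrt (Real.sqrt IGv) :=
    mul_nonneg (Real.sqrt_nonneg _) (Real.sqrt_nonneg _)
  calc Real.sqrt 2 * (Real.sqrt (Real.sqrt IGu) * Real.sqrt (Real.sqrt IGv))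
      ≤ 2 * (Real.sqrt (Real.sqrt IGu) * Real.sqrt (Real.sqrt IGv)) :=
        mul_le_mul_of_nonneg_right hs2 hab
    _ = 2 * Real.sqrt (Real.sqrt IGu) * Real.sqrt (Real.sqrt IGv) := by ring
end
end

section
/- Let Ω = 𝕋 × ℝ and let (ρ, u) be a sufficiently smooth solution of (HINS) on [0,T] with ρ, ∇ρ bounded and u Lipschitz in space uniformly in time. Then there is a universal constant C such that for every t ∈ [0,T] the oscillation of the density satisfies ‖ρ_≠(t)‖_{L^∞(Ω)} ≤ ‖ρ_{0,≠}‖_{L^∞(Ω)} + C ∫₀^t ‖u_≠(s)‖_{L^∞(Ω)} ‖∇ρ(s)‖_{L^∞(Ω)} ds. -/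
/- STATEMENT 17: For a sufficiently smooth solution (ρ,u) of (HINS) on [0,T] × (𝕋×ℝ)
with ρ, ∇ρ bounded and u Lipschitz in space uniformly in time, there is a universal
constant C such that ‖ρ_≠(t)‖_{L^∞} ≤ ‖ρ_{0,≠}‖_{L^∞} + C∫₀ᵗ‖u_≠(s)‖_{L^∞}‖∇ρ(s)‖_{L^∞} ds.
Functions on 𝕋 × ℝ are represented by 1-periodic functions in the first variable,
with μΩ = volume restricted to [0,1) × ℝ. -/

noncomputable section

open MeasureTheory Set
open scoped ENNReal NNReal

def c1 (w : Pt → Pt) : Pt → ℝ := fun x => (w x).1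
def c2 (w : Pt → Pt) : Pt → ℝ := fun x => (w x).2

/-- horizontal average f̄ -/
def hav (f : Pt → ℝ) (x : Pt) : ℝ := ∫ s in (0:ℝ)..1, f (s, x.2)

/-- oscillation part f_≠ = f − f̄ -/
def osc (f : Pt → ℝ) (x : Pt) : ℝ := f x - hav f x

/-- the (HINS) system on the time set S: transport, horizontally dissipated momentum,
incompressibility, periodicity and the initial conditions. -/
structure IsHINSOn (ρ : ℝ → Pt → ℝ) (u : ℝ → Pt → Pt) (P : ℝ → Pt → ℝ)
    (ρ₀ : Pt → ℝ) (u₀ : Pt → Pt) (S : Set ℝ) : Prop where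
  per_ρ : ∀ t ∈ S, Per (ρ t)
  per_u1 : ∀ t ∈ S, Per (c1 (u t))
  per_u2 : ∀ t ∈ S, Per (c2 (u t))
  per_P : ∀ t ∈ S, Per (P t)
  transport : ∀ t ∈ S, ∀ x : Pt,
    deriv (fun s => ρ s x) t + (u t x).1 * pd1 (ρ t) x + (u t x).2 * pd2 (ρ t) x = 0
  momentum1 : ∀ t ∈ S, ∀ x : Pt,
    ρ t x * (deriv (fun s => (u s x).1) t
        + (u t x).1 * pd1 (c1 (u t)) x + (u t x).2 * pd2 (c1 (u t)) x)
      - pd1 (pd1 (c1 (u t))) x + pd1 (P t) x = 0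
  momentum2 : ∀ t ∈ S, ∀ x : Pt,
    ρ t x * (deriv (fun s => (u s x).2) t
        + (u t x).1 * pd1 (c2 (u t)) x + (u t x).2 * pd2 (c2 (u t)) x)
      - pd1 (pd1 (c2 (u t))) x + pd2 (P t) x = 0
  incomp : ∀ t ∈ S, ∀ x : Pt, pd1 (c1 (u t)) x + pd2 (c2 (u t)) x = 0
  init_ρ : ρ 0 = ρ₀
  init_u : u 0 = u₀

namespace Stmt17Aux

open Metric Function

lemma le_iSup_rat {E : Type*} [NormedAddCommGroup E] (g : Pt → E) (hg : Continuous g) (y : Pt) :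
    (‖g y‖₊ : ℝ≥0∞) ≤ ⨆ q : ℚ × ℚ, (‖g ((q.1 : ℝ), (q.2 : ℝ))‖₊ : ℝ≥0∞) := by
  by_contra h
  push_neg at h
  set S := ⨆ q : ℚ × ℚ, (‖g ((q.1 : ℝ), (q.2 : ℝ))‖₊ : ℝ≥0∞) with hS
  have hcont : Continuous fun z : Pt => (‖g z‖₊ : ℝ≥0∞) :=
    ENNReal.continuous_coe.comp (continuous_nnnorm.comp hg)
  have hopen : IsOpen {z : Pt | S < (‖g z‖₊ : ℝ≥0∞)} := by
    have := isOpen_Ioi (a := S)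
    exact this.preimage hcont
  have hd : DenseRange (Prod.map (fun q : ℚ => (q : ℝ)) (fun q : ℚ => (q : ℝ))) :=
    (Rat.denseRange_cast).prodMap Rat.denseRange_cast
  obtain ⟨z, hz_mem, hz⟩ := Dense.exists_mem_open hd hopen ⟨y, h⟩
  obtain ⟨q, rfl⟩ := hz_mem
  have : (‖g (Prod.map (fun q : ℚ => (q:ℝ)) (fun q : ℚ => (q:ℝ)) q)‖₊ : ℝ≥0∞) ≤ S := by
    have := le_iSup (fun q : ℚ × ℚ => (‖g ((q.1 : ℝ), (q.2 : ℝ))‖₊ : ℝ≥0∞)) q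
    simpa [Prod.map] using this
  exact absurd hz (not_lt.2 this)

lemma nnnorm_le_eLpNormTop {E : Type*} [NormedAddCommGroup E] (g : Pt → E) (hg : Continuous g)
    (x : Pt) (hx1 : 0 ≤ x.1) (hx2 : x.1 < 1) :
    (‖g x‖₊ : ℝ≥0∞) ≤ eLpNorm g ⊤ μΩ := by
  rw [eLpNorm_exponent_top]
  by_contra h
  push_neg at h
  set S := eLpNormEssSup g μΩ with hS
  have hae : ∀ᵐ z ∂μΩ, (‖g z‖₊ : ℝ≥0∞) ≤ S := ae_le_eLpNormEssSup
  have hnull : μΩ {z : Pt | S < (‖g z‖₊ : ℝ≥0∞)} = 0 := by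
    have := ae_iff.1 hae
    simpa [not_le] using this
  have hcont : Continuous fun z : Pt => (‖g z‖₊ : ℝ≥0∞) :=
    ENNReal.continuous_coe.comp (continuous_nnnorm.comp hg)
  have hopen : IsOpen {z : Pt | S < (‖g z‖₊ : ℝ≥0∞)} := (isOpen_Ioi (a := S)).preimage hcont
  obtain ⟨ε, hε, hball⟩ := Metric.isOpen_iff.1 hopen x h
  set δ : ℝ := min (ε / 2) ((1 - x.1) / 2) with hδdef
  have hδ0 : 0 < δ := lt_min (by linarith) (by linarith)
  have hδε : δ < ε := lt_of_le_of_lt (min_le_left _ _) (by linarith)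
  have hδ1 : x.1 + δ ≤ 1 := by
    have : δ ≤ (1 - x.1) / 2 := min_le_right _ _
    linarith
  set B : Set Pt := Set.Ico x.1 (x.1 + δ) ×ˢ Set.Ioo (x.2 - δ) (x.2 + δ) with hB
  have hBsub : B ⊆ {z : Pt | S < (‖g z‖₊ : ℝ≥0∞)} ∩ (Set.Ico (0:ℝ) 1 ×ˢ Set.univ) := by
    rintro ⟨z1, z2⟩ ⟨hz1, hz2⟩
    simp only [mem_Ico] at hz1
    simp only [mem_Ioo] at hz2
    constructor
    · apply hball
      rw [Metric.mem_ball, Prod.dist_eq]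
      have h1 : dist z1 x.1 < δ := by
        rw [Real.dist_eq, abs_lt]; constructor <;> [linarith [hz1.2]; linarith [hz1.1]]
      have h2 : dist z2 x.2 < δ := by
        rw [Real.dist_eq, abs_lt]; constructor <;> [linarith [hz2.1]; linarith [hz2.2]]
      calc max (dist z1 x.1) (dist z2 x.2) ≤ max δ δ := by
            exact max_le_max h1.le h2.le
        _ = δ := max_self δ
        _ < ε := hδε
    · exact ⟨⟨le_trans hx1 hz1.1, lt_of_lt_of_le hz1.2 hδ1⟩, trivial⟩
  have hvol : 0 < volume B := by
    rw [hB, MeasureTheory.Measure.volume_eq_prod, Measure.prod_prod, Real.volume_Ico,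
      Real.volume_Ioo]
    have h1 : (0:ℝ≥0∞) < ENNReal.ofReal (x.1 + δ - x.1) := by
      rw [ENNReal.ofReal_pos]; linarith
    have h2 : (0:ℝ≥0∞) < ENNReal.ofReal (x.2 + δ - (x.2 - δ)) := by
      rw [ENNReal.ofReal_pos]; linarith
    exact ENNReal.mul_pos h1.ne' h2.ne'
  have : volume B ≤ μΩ {z : Pt | S < (‖g z‖₊ : ℝ≥0∞)} := by
    rw [μΩ, Measure.restrict_apply hopen.measurableSet]
    exact measure_mono hBsub
  rw [hnull] at this
  exact absurd (lt_of_lt_of_le hvol this) (lt_irrefl 0)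

lemma per_shift {E : Type*} (g : Pt → E) (hper : ∀ z : Pt, g (z.1 + 1, z.2) = g z) (x : Pt) :
    g (Int.fract x.1, x.2) = g x := by
  have hp : Function.Periodic (fun σ : ℝ => g (σ, x.2)) 1 := fun σ => by
    simpa using hper (σ, x.2)
  have h := hp.sub_int_mul_eq (x := x.1) ⌊x.1⌋
  simp only [mul_one] at h
  rw [show x.1 - (⌊x.1⌋ : ℝ) = Int.fract x.1 from Int.self_sub_floor x.1] at h
  simpa using h

lemma nnnorm_le_eLpNormTop_per {E : Type*} [NormedAddCommGroup E] (g : Pt → E)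
    (hg : Continuous g) (hper : ∀ z : Pt, g (z.1 + 1, z.2) = g z) (x : Pt) :
    (‖g x‖₊ : ℝ≥0∞) ≤ eLpNorm g ⊤ μΩ := by
  rw [← per_shift g hper x]
  exact nnnorm_le_eLpNormTop g hg _ (Int.fract_nonneg _) (Int.fract_lt_one _)

lemma cont_paramInt {X : Type*} [TopologicalSpace X] [FirstCountableTopology X] [LocallyCompactSpace X]
    (g : X → ℝ → ℝ) (hg : Continuous fun p : X × ℝ => g p.1 p.2) :
    Continuous fun p : X => ∫ σ in (0:ℝ)..1, g p σ := by
  rw [continuous_iff_continuousAt]; intro p₀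
  obtain ⟨K, hK_cp, hK_mem⟩ := exists_compact_mem_nhds p₀
  obtain ⟨C, hC⟩ := (hK_cp.prod (isCompact_Icc (a := (0:ℝ)) (b := 1))).exists_bound_of_continuousOn
    hg.continuousOn
  apply intervalIntegral.continuousAt_of_dominated_interval (bound := fun _ => C)
  · exact Filter.Eventually.of_forall fun x =>
      (hg.comp (Continuous.prodMk_right x)).aestronglyMeasurable
  · filter_upwards [hK_mem] with x hx
    refine ae_of_all _ fun σ hσ => ?_
    have hσ' : σ ∈ Set.Icc (0:ℝ) 1 := by
      rw [Set.uIoc_of_le (zero_le_one)] at hσ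
      exact ⟨hσ.1.le, hσ.2⟩
    exact hC (x, σ) ⟨hx, hσ'⟩
  · exact intervalIntegrable_const
  · exact ae_of_all _ fun σ hσ =>
      (hg.comp (continuous_id.prodMk continuous_const)).continuousAt



open Metric Function

section Slice

variable {ρ : ℝ → Pt → ℝ}

lemma hasFDerivAt_unc (hρ : ContDiff ℝ (⊤ : ℕ∞) (Function.uncurry ρ)) (s : ℝ) (x : Pt) :
    HasFDerivAt (Function.uncurry ρ) (fderiv ℝ (Function.uncurry ρ) (s, x)) (s, x) :=
  (hρ.differentiable (by simp) (s, x)).hasFDerivAt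

lemma hasDerivAt_time (hρ : ContDiff ℝ (⊤ : ℕ∞) (Function.uncurry ρ)) (s : ℝ) (x : Pt) :
    HasDerivAt (fun τ => ρ τ x)
      (fderiv ℝ (Function.uncurry ρ) (s, x) (1, (0, 0))) s := by
  have h1 : HasDerivAt (fun τ : ℝ => (τ, x)) ((1 : ℝ), (0 : Pt)) s :=
    (hasDerivAt_id s).prodMk (hasDerivAt_const s x)
  have := (hasFDerivAt_unc hρ s x).comp_hasDerivAt s h1
  exact this

lemma hasDerivAt_pd1 (hρ : ContDiff ℝ (⊤ : ℕ∞) (Function.uncurry ρ)) (s : ℝ) (x : Pt) :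
    HasDerivAt (fun σ => ρ s (σ, x.2))
      (fderiv ℝ (Function.uncurry ρ) (s, x) ((0 : ℝ), ((1 : ℝ), (0 : ℝ)))) x.1 := by
  have h1 : HasDerivAt (fun σ : ℝ => ((s : ℝ), (σ, x.2))) ((0 : ℝ), ((1 : ℝ), (0 : ℝ))) x.1 :=
    (hasDerivAt_const x.1 s).prodMk ((hasDerivAt_id x.1).prodMk (hasDerivAt_const x.1 x.2))
  have := (hasFDerivAt_unc hρ s (x.1, x.2)).comp_hasDerivAt x.1 h1
  exact this

lemma hasDerivAt_pd2 (hρ : ContDiff ℝ (⊤ : ℕ∞) (Function.uncurry ρ)) (s : ℝ) (x : Pt) :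
    HasDerivAt (fun σ => ρ s (x.1, σ))
      (fderiv ℝ (Function.uncurry ρ) (s, x) ((0 : ℝ), ((0 : ℝ), (1 : ℝ)))) x.2 := by
  have h1 : HasDerivAt (fun σ : ℝ => ((s : ℝ), (x.1, σ))) ((0 : ℝ), ((0 : ℝ), (1 : ℝ))) x.2 :=
    (hasDerivAt_const x.2 s).prodMk ((hasDerivAt_const x.2 x.1).prodMk (hasDerivAt_id x.2))
  have := (hasFDerivAt_unc hρ s (x.1, x.2)).comp_hasDerivAt x.2 h1
  exact this

lemma pd1_eq (hρ : ContDiff ℝ (⊤ : ℕ∞) (Function.uncurry ρ)) (s : ℝ) (x : Pt) :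
    pd1 (ρ s) x = fderiv ℝ (Function.uncurry ρ) (s, x) ((0 : ℝ), ((1 : ℝ), (0 : ℝ))) :=
  (hasDerivAt_pd1 hρ s x).deriv

lemma pd2_eq (hρ : ContDiff ℝ (⊤ : ℕ∞) (Function.uncurry ρ)) (s : ℝ) (x : Pt) :
    pd2 (ρ s) x = fderiv ℝ (Function.uncurry ρ) (s, x) ((0 : ℝ), ((0 : ℝ), (1 : ℝ))) :=
  (hasDerivAt_pd2 hρ s x).deriv

lemma dt_eq (hρ : ContDiff ℝ (⊤ : ℕ∞) (Function.uncurry ρ)) (s : ℝ) (x : Pt) :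
    deriv (fun τ => ρ τ x) s = fderiv ℝ (Function.uncurry ρ) (s, x) (1, (0, 0)) :=
  (hasDerivAt_time hρ s x).deriv

lemma fderiv_apply_decomp (D : ℝ × Pt →L[ℝ] ℝ) (c v₁ v₂ : ℝ) :
    D (c, (v₁, v₂)) = c * D (1, (0, 0)) + v₁ * D ((0 : ℝ), ((1 : ℝ), (0 : ℝ)))
      + v₂ * D ((0 : ℝ), ((0 : ℝ), (1 : ℝ))) := by
  have h : ((c, (v₁, v₂)) : ℝ × Pt)
      = c • ((1 : ℝ), ((0 : ℝ), (0 : ℝ))) + v₁ • ((0 : ℝ), ((1 : ℝ), (0 : ℝ)))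
        + v₂ • ((0 : ℝ), ((0 : ℝ), (1 : ℝ))) := by
    simp [Prod.ext_iff]
  rw [h, map_add, map_add, D.map_smul, D.map_smul, D.map_smul, smul_eq_mul, smul_eq_mul, smul_eq_mul]

lemma cont_fderiv_apply (hρ : ContDiff ℝ (⊤ : ℕ∞) (Function.uncurry ρ)) (v : ℝ × Pt) :
    Continuous fun p : ℝ × Pt => fderiv ℝ (Function.uncurry ρ) p v :=
  (hρ.continuous_fderiv (by simp)).clm_apply continuous_const

end Slice

section ODE

variable {E : Type*} [NormedAddCommGroup E] [NormedSpace ℝ E] [CompleteSpace E]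

lemma hasDerivWithinAt_singleton' (f : ℝ → E) (x : ℝ) (w : E) :
    HasDerivWithinAt f w {x} x := by
  rw [hasDerivWithinAt_iff_hasFDerivWithinAt]
  simp [HasFDerivWithinAt, nhdsWithin_singleton, hasFDerivAtFilter_iff_isLittleO,
    Asymptotics.isLittleO_pure]

lemma ode_step (v : ℝ → E → E) (L : ℝ≥0) (hc : Continuous (Function.uncurry v))
    (hl : ∀ t, LipschitzWith L (v t)) (c d : ℝ) (hcd : c ≤ d)
    (hlen : d - c ≤ (2 * ((L : ℝ) + 1))⁻¹) (y₀ : E) :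
    ∃ γ : ℝ → E, γ d = y₀ ∧ ∀ s ∈ Icc c d, HasDerivWithinAt γ (v s (γ s)) (Icc c d) s := by
  obtain ⟨A, hA⟩ := (isCompact_Icc (a := c) (b := d)).exists_bound_of_continuousOn
    (Continuous.continuousOn (hc.comp (continuous_id.prodMk continuous_const))
      (s := Icc c d) (f := fun t => v t y₀))
  have hA0 : 0 ≤ A := le_trans (norm_nonneg _) (hA d ⟨hcd, le_refl d⟩)
  have hL0 : (0 : ℝ) ≤ (L : ℝ) := L.2
  have hpl : IsPicardLindelof v (tmin := c) (tmax := d) ⟨d, ⟨hcd, le_refl d⟩⟩ y₀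
      ⟨A + 1, by linarith⟩ 0 ⟨A + (L : ℝ) * (A + 1), by positivity⟩ L := by
    refine ⟨fun t _ => (hl t).lipschitzOnWith,
      fun x _ => Continuous.continuousOn (hc.comp (continuous_id.prodMk continuous_const)),
      fun t ht x hx => ?_, ?_⟩
    · have h1 : ‖v t x - v t y₀‖ ≤ (L : ℝ) * ‖x - y₀‖ := by
        have := (hl t).dist_le_mul x y₀
        rwa [dist_eq_norm, dist_eq_norm] at this
      have h2 : ‖x - y₀‖ ≤ A + 1 := by rwa [Metric.mem_closedBall, dist_eq_norm] at hx
      show ‖v t x‖ ≤ A + (L : ℝ) * (A + 1)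
      calc ‖v t x‖ = ‖v t y₀ + (v t x - v t y₀)‖ := by rw [show v t y₀ + (v t x - v t y₀) = v t x from by abel]
        _ ≤ ‖v t y₀‖ + ‖v t x - v t y₀‖ := norm_add_le _ _
        _ ≤ A + (L : ℝ) * (A + 1) :=
            add_le_add (hA t ht) (h1.trans (mul_le_mul_of_nonneg_left h2 hL0))
    · have hC0 : 0 ≤ A + (L : ℝ) * (A + 1) := by positivity
      have hmax : max (d - d) (d - c) = d - c := by
        rw [sub_self]; exact max_eq_right (by linarith)
      have hb : (0 : ℝ) < 2 * ((L : ℝ) + 1) := by positivity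
      have key : (A + (L : ℝ) * (A + 1)) * (d - c) ≤ A + 1 :=
        calc (A + (L : ℝ) * (A + 1)) * (d - c)
            ≤ (A + (L : ℝ) * (A + 1)) * (2 * ((L : ℝ) + 1))⁻¹ :=
              mul_le_mul_of_nonneg_left hlen hC0
          _ ≤ A + 1 := by
              rw [mul_inv_le_iff₀ hb]
              nlinarith
      show (A + (L : ℝ) * (A + 1)) * max (d - d) (d - c) ≤ (A + 1) - ((0 : ℝ≥0) : ℝ)
      rw [hmax, NNReal.coe_zero, sub_zero]
      exact key
  obtain ⟨γ, hγ1, hγ2⟩ := hpl.exists_eq_forall_mem_Icc_hasDerivWithinAt₀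
  exact ⟨γ, hγ1, hγ2⟩

lemma ode_glue (v : ℝ → E → E) (L : ℝ≥0) (hc : Continuous (Function.uncurry v))
    (hl : ∀ t, LipschitzWith L (v t)) :
    ∀ (n : ℕ) (a b : ℝ), a ≤ b → b - a ≤ n * (2 * ((L : ℝ) + 1))⁻¹ → ∀ y₀ : E,
      ∃ γ : ℝ → E, γ b = y₀ ∧ ∀ s ∈ Icc a b, HasDerivWithinAt γ (v s (γ s)) (Icc a b) s := by
  intro n
  induction n with
  | zero =>
    intro a b hab hlen y₀
    have hba : b = a := le_antisymm (by simpa using hlen) hab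
    subst hba
    refine ⟨fun _ => y₀, rfl, fun s hs => ?_⟩
    have hsb : s = b := le_antisymm hs.2 hs.1
    subst hsb
    rw [Icc_self]
    exact hasDerivWithinAt_singleton' _ _ _
  | succ n ih =>
    intro a b hab hlen y₀
    set δ : ℝ := (2 * ((L : ℝ) + 1))⁻¹ with hδdef
    have hδ0 : 0 < δ := by positivity
    by_cases hcase : b - a ≤ δ
    · exact ode_step v L hc hl a b hab hcase y₀
    · push_neg at hcase
      set m := b - δ with hm
      have ham : a ≤ m := by simp only [hm]; linarith
      have hmb : m ≤ b := by simp only [hm]; linarith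
      obtain ⟨γ₂, hγ₂b, hγ₂⟩ := ode_step v L hc hl m b hmb (le_of_eq (by rw [hm]; ring)) y₀
      obtain ⟨γ₁, hγ₁m, hγ₁⟩ := ih a m ham (by push_cast at hlen ⊢; simp only [hm]; linarith) (γ₂ m)
      classical
      refine ⟨fun s => if s ≤ m then γ₁ s else γ₂ s, ?_, ?_⟩
      · have hbm : ¬ b ≤ m := by simp only [hm]; linarith
        simp [hbm, hγ₂b]
      · intro s hs
        set γ : ℝ → E := fun s => if s ≤ m then γ₁ s else γ₂ s with hγdef
        have hval1 : ∀ s' ∈ Icc a m, γ s' = γ₁ s' := fun s' hs' => if_pos hs'.2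
        have hval2 : ∀ s' ∈ Icc m b, γ s' = γ₂ s' := by
          intro s' hs'
          by_cases h : s' ≤ m
          · have hsm' : s' = m := le_antisymm h hs'.1
            simp [hγdef, h, hsm', hγ₁m]
          · simp [hγdef, h]
        rcases lt_trichotomy s m with hsm | hsm | hsm
        · have hmem : Icc a m ∈ nhdsWithin s (Icc a b) :=
            mem_nhdsWithin.mpr ⟨Iio m, isOpen_Iio, hsm, fun z hz => ⟨hz.2.1, hz.1.le⟩⟩
          have h1 : HasDerivWithinAt γ₁ (v s (γ₁ s)) (Icc a b) s :=
            (hγ₁ s ⟨hs.1, hsm.le⟩).mono_of_mem_nhdsWithin hmem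
          have heq : γ =ᶠ[nhdsWithin s (Icc a b)] γ₁ := by
            filter_upwards [hmem] with z hz using hval1 z hz
          have hγs : γ s = γ₁ s := if_pos hsm.le
          rw [show v s (γ s) = v s (γ₁ s) from by rw [hγs]]
          exact h1.congr_of_eventuallyEq heq hγs
        · have hγm1 : γ s = γ₁ s := if_pos hsm.le
          have e12 : γ₁ s = γ₂ s := by rw [hsm, hγ₁m]
          have hγm2 : γ s = γ₂ s := hγm1.trans e12
          have H₁ : HasDerivWithinAt γ (v s (γ s)) (Icc a m) s := by
            rw [show v s (γ s) = v s (γ₁ s) from by rw [hγm1]]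
            exact (hγ₁ s ⟨hs.1, hsm.le⟩).congr hval1 hγm1
          have H₂ : HasDerivWithinAt γ (v s (γ s)) (Icc m b) s := by
            rw [show v s (γ s) = v s (γ₂ s) from by rw [hγm2]]
            exact (hγ₂ s ⟨hsm.ge, hs.2⟩).congr hval2 hγm2
          have := H₁.union H₂
          rwa [Icc_union_Icc_eq_Icc ham hmb] at this
        · have hmem : Icc m b ∈ nhdsWithin s (Icc a b) :=
            mem_nhdsWithin.mpr ⟨Ioi m, isOpen_Ioi, hsm, fun z hz => ⟨hz.1.le, hz.2.2⟩⟩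
          have h1 : HasDerivWithinAt γ₂ (v s (γ₂ s)) (Icc a b) s :=
            (hγ₂ s ⟨hsm.le, hs.2⟩).mono_of_mem_nhdsWithin hmem
          have heq : γ =ᶠ[nhdsWithin s (Icc a b)] γ₂ := by
            filter_upwards [hmem] with z hz using hval2 z hz
          have hγs : γ s = γ₂ s := if_neg (not_le.2 hsm)
          rw [show v s (γ s) = v s (γ₂ s) from by rw [hγs]]
          exact h1.congr_of_eventuallyEq heq hγs

end ODE

lemma hasDerivAt_havInt {ρ : ℝ → Pt → ℝ} (hρ : ContDiff ℝ (⊤ : ℕ∞) (Function.uncurry ρ))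
    (z z' : ℝ → ℝ) (s₀ ε : ℝ) (hε : 0 < ε)
    (hz : ∀ s ∈ Metric.ball s₀ ε, HasDerivAt z (z' s) s)
    (hz' : ContinuousOn z' (Metric.ball s₀ ε)) :
    HasDerivAt (fun s => ∫ σ in (0:ℝ)..1, ρ s (σ, z s))
      (∫ σ in (0:ℝ)..1,
        (fderiv ℝ (Function.uncurry ρ) (s₀, (σ, z s₀))) (1, (0, z' s₀))) s₀ := by
  have hε2 : 0 < ε / 2 := by linarith
  have hsub : Metric.closedBall s₀ (ε / 2) ⊆ Metric.ball s₀ ε :=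
    Metric.closedBall_subset_ball (by linarith)
  have hsub2 : Metric.ball s₀ (ε / 2) ⊆ Metric.closedBall s₀ (ε / 2) :=
    Metric.ball_subset_closedBall
  have hzc : ContinuousOn z (Metric.closedBall s₀ (ε / 2)) := fun y hy =>
    ((hz y (hsub hy)).continuousAt).continuousWithinAt
  have hcompact : IsCompact ((Metric.closedBall s₀ (ε / 2)) ×ˢ (Icc (0 : ℝ) 1)) :=
    (isCompact_closedBall _ _).prod isCompact_Icc
  have hmapc : ContinuousOn
      (fun p : ℝ × ℝ => ‖fderiv ℝ (Function.uncurry ρ) (p.1, (p.2, z p.1))‖)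
      ((Metric.closedBall s₀ (ε / 2)) ×ˢ (Icc (0 : ℝ) 1)) := by
    apply ContinuousOn.norm
    apply Continuous.comp_continuousOn (hρ.continuous_fderiv (by simp))
    exact continuousOn_fst.prodMk
      (continuousOn_snd.prodMk (hzc.comp continuousOn_fst (fun p hp => hp.1)))
  obtain ⟨K₁, hK₁⟩ := hcompact.exists_bound_of_continuousOn hmapc
  have hK₁' : ∀ p ∈ (Metric.closedBall s₀ (ε / 2)) ×ˢ (Icc (0 : ℝ) 1),
      ‖fderiv ℝ (Function.uncurry ρ) (p.1, (p.2, z p.1))‖ ≤ K₁ := by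
    intro p hp
    have := hK₁ p hp
    rwa [norm_norm] at this
  have hK₁0 : 0 ≤ K₁ :=
    le_trans (norm_nonneg _)
      (hK₁' (s₀, 0) ⟨Metric.mem_closedBall_self (by linarith), ⟨le_refl 0, zero_le_one⟩⟩)
  obtain ⟨K₂, hK₂⟩ :=
    (isCompact_closedBall s₀ (ε / 2)).exists_bound_of_continuousOn (hz'.mono hsub)
  have hK₂0 : 0 ≤ K₂ :=
    le_trans (norm_nonneg _) (hK₂ s₀ (Metric.mem_closedBall_self (by linarith)))
  have key := (intervalIntegral.hasDerivAt_integral_of_dominated_loc_of_deriv_le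
    (F := fun s σ => ρ s (σ, z s))
    (F' := fun s σ => (fderiv ℝ (Function.uncurry ρ) (s, (σ, z s))) (1, (0, z' s)))
    (x₀ := s₀) (a := 0) (b := 1) (μ := volume) (bound := fun _ => K₁ * (1 + K₂)) (Metric.ball_mem_nhds s₀ hε2)
    ?_ ?_ ?_ ?_ ?_ ?_)
  · exact key.2
  · exact Filter.Eventually.of_forall fun x =>
      (hρ.continuous.comp
        (continuous_const.prodMk (continuous_id.prodMk continuous_const))).aestronglyMeasurable
  · exact (hρ.continuous.comp
      (continuous_const.prodMk (continuous_id.prodMk continuous_const))).intervalIntegrable _ _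
  · exact (((hρ.continuous_fderiv (by simp)).comp
      (continuous_const.prodMk (continuous_id.prodMk continuous_const))).clm_apply
        continuous_const).aestronglyMeasurable
  · refine ae_of_all _ fun σ hσ x hx => ?_
    have hσ' : σ ∈ Icc (0 : ℝ) 1 := by
      rw [Set.uIoc_of_le zero_le_one] at hσ
      exact ⟨hσ.1.le, hσ.2⟩
    have hx' : x ∈ Metric.closedBall s₀ (ε / 2) := hsub2 hx
    have hb1 : ‖fderiv ℝ (Function.uncurry ρ) (x, (σ, z x))‖ ≤ K₁ := hK₁' (x, σ) ⟨hx', hσ'⟩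
    have hz'b : |z' x| ≤ K₂ := by
      have := hK₂ x hx'
      rwa [Real.norm_eq_abs] at this
    have hvec : ‖((1 : ℝ), ((0 : ℝ), z' x))‖ ≤ 1 + K₂ := by
      rw [Prod.norm_def, Prod.norm_def]
      simp only [Real.norm_eq_abs]
      refine max_le (by norm_num; linarith) (max_le (by norm_num; linarith) (by linarith))
    calc ‖(fderiv ℝ (Function.uncurry ρ) (x, (σ, z x))) (1, (0, z' x))‖
        ≤ ‖fderiv ℝ (Function.uncurry ρ) (x, (σ, z x))‖ * ‖((1 : ℝ), ((0 : ℝ), z' x))‖ :=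
          ContinuousLinearMap.le_opNorm _ _
      _ ≤ K₁ * (1 + K₂) := mul_le_mul hb1 hvec (norm_nonneg _) hK₁0
  · exact intervalIntegrable_const
  · refine ae_of_all _ fun σ hσ x hx => ?_
    have hxball : x ∈ Metric.ball s₀ ε := Metric.ball_subset_ball (by linarith) hx
    have hmap : HasDerivAt (fun s : ℝ => (s, (σ, z s))) ((1 : ℝ), ((0 : ℝ), z' x)) x :=
      (hasDerivAt_id x).prodMk ((hasDerivAt_const x σ).prodMk (hz x hxball))
    exact ((hρ.differentiable (by simp) _).hasFDerivAt).comp_hasDerivAt x hmap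

end Stmt17Aux

theorem stmt17 :
    ∃ C > (0:ℝ),
      ∀ (T : ℝ) (ρ : ℝ → Pt → ℝ) (u : ℝ → Pt → Pt) (P : ℝ → Pt → ℝ)
        (ρ₀ : Pt → ℝ) (u₀ : Pt → Pt),
        0 ≤ T →
        IsHINSOn ρ u P ρ₀ u₀ (Icc 0 T) →
        ContDiff ℝ (⊤ : ℕ∞) (Function.uncurry ρ) →
        ContDiff ℝ (⊤ : ℕ∞) (Function.uncurry u) →
        ContDiff ℝ (⊤ : ℕ∞) (Function.uncurry P) →
        (∃ M : ℝ, ∀ t ∈ Icc (0:ℝ) T, ∀ x : Pt,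
          |ρ t x| ≤ M ∧ |pd1 (ρ t) x| ≤ M ∧ |pd2 (ρ t) x| ≤ M) →
        (∃ L : ℝ≥0, ∀ t ∈ Icc (0:ℝ) T, LipschitzWith L (u t)) →
        ∀ t ∈ Icc (0:ℝ) T,
          eLpNorm (fun x => osc (ρ t) x) ⊤ μΩ ≤
            eLpNorm (fun x => osc ρ₀ x) ⊤ μΩ +
              ENNReal.ofReal C *
                ∫⁻ s in Ioc (0:ℝ) t,
                  eLpNorm (fun x => (osc (c1 (u s)) x, osc (c2 (u s)) x)) ⊤ μΩ *
                    eLpNorm (fun x => (pd1 (ρ s) x, pd2 (ρ s) x)) ⊤ μΩ := by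
  classical
  refine ⟨3, by norm_num, ?_⟩
  intro T ρ u P ρ₀ u₀ hT hH hρ hu hP hM hLip t ht
  obtain ⟨M, hMb⟩ := hM
  obtain ⟨L, hLb⟩ := hLip
  clear hP
  have hM0 : 0 ≤ M := le_trans (abs_nonneg _) (hMb 0 ⟨le_refl 0, hT⟩ (0, 0)).1
  have hL0 : (0 : ℝ) ≤ (L : ℝ) := L.2
  have hIccsub : Icc (0:ℝ) t ⊆ Icc (0:ℝ) T := Icc_subset_Icc (le_refl 0) ht.2
  have huC : Continuous (fun p : ℝ × Pt => u p.1 p.2) := hu.continuous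
  have hρC : Continuous (fun p : ℝ × Pt => ρ p.1 p.2) := hρ.continuous
  -- joint continuity of oscillation parts of u
  have hhav1 : Continuous (fun p : ℝ × Pt => hav (c1 (u p.1)) p.2) := by
    exact Stmt17Aux.cont_paramInt (X := ℝ × Pt) (fun p σ => (u p.1 (σ, p.2.2)).1)
      (Continuous.fst (hu.continuous.comp ((continuous_fst.comp continuous_fst).prodMk
        (continuous_snd.prodMk (continuous_snd.comp (continuous_snd.comp continuous_fst))))))
  have hhav2 : Continuous (fun p : ℝ × Pt => hav (c2 (u p.1)) p.2) := by
    exact Stmt17Aux.cont_paramInt (X := ℝ × Pt) (fun p σ => (u p.1 (σ, p.2.2)).2)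
      (Continuous.snd (hu.continuous.comp ((continuous_fst.comp continuous_fst).prodMk
        (continuous_snd.prodMk (continuous_snd.comp (continuous_snd.comp continuous_fst))))))
  have hosc1 : Continuous (fun p : ℝ × Pt => osc (c1 (u p.1)) p.2) :=
    (Continuous.fst huC).sub hhav1
  have hosc2 : Continuous (fun p : ℝ × Pt => osc (c2 (u p.1)) p.2) :=
    (Continuous.snd huC).sub hhav2
  set vecA : ℝ → Pt → Pt := fun s x => (osc (c1 (u s)) x, osc (c2 (u s)) x) with hvecA
  set vecB : ℝ → Pt → Pt := fun s x => (pd1 (ρ s) x, pd2 (ρ s) x) with hvecB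
  have hvecAC : Continuous (fun p : ℝ × Pt => vecA p.1 p.2) := hosc1.prodMk hosc2
  have hpd1C : Continuous (fun p : ℝ × Pt => pd1 (ρ p.1) p.2) := by
    have he : (fun p : ℝ × Pt => pd1 (ρ p.1) p.2)
        = fun p : ℝ × Pt => fderiv ℝ (Function.uncurry ρ) p ((0:ℝ), ((1:ℝ), (0:ℝ))) :=
      funext fun p => Stmt17Aux.pd1_eq hρ p.1 p.2
    rw [he]; exact Stmt17Aux.cont_fderiv_apply hρ _
  have hpd2C : Continuous (fun p : ℝ × Pt => pd2 (ρ p.1) p.2) := by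
    have he : (fun p : ℝ × Pt => pd2 (ρ p.1) p.2)
        = fun p : ℝ × Pt => fderiv ℝ (Function.uncurry ρ) p ((0:ℝ), ((0:ℝ), (1:ℝ))) :=
      funext fun p => Stmt17Aux.pd2_eq hρ p.1 p.2
    rw [he]; exact Stmt17Aux.cont_fderiv_apply hρ _
  have hvecBC : Continuous (fun p : ℝ × Pt => vecB p.1 p.2) := hpd1C.prodMk hpd2C
  -- periodicity of the oscillation parts and of the gradient
  have hperA : ∀ s ∈ Icc (0:ℝ) T, ∀ z : Pt, vecA s (z.1 + 1, z.2) = vecA s z := by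
    intro s hs z
    have h1 : osc (c1 (u s)) (z.1 + 1, z.2) = osc (c1 (u s)) z := by
      simp only [osc, hav]
      rw [hH.per_u1 s hs z]
    have h2 : osc (c2 (u s)) (z.1 + 1, z.2) = osc (c2 (u s)) z := by
      simp only [osc, hav]
      rw [hH.per_u2 s hs z]
    simp only [hvecA, h1, h2]
  have hperB : ∀ s ∈ Icc (0:ℝ) T, ∀ z : Pt, vecB s (z.1 + 1, z.2) = vecB s z := by
    intro s hs z
    have h1 : pd1 (ρ s) (z.1 + 1, z.2) = pd1 (ρ s) z := by
      show deriv (fun σ => ρ s (σ, z.2)) (z.1 + 1) = deriv (fun σ => ρ s (σ, z.2)) z.1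
      rw [← deriv_comp_add_const (fun σ => ρ s (σ, z.2)) 1 z.1]
      congr 1
      funext σ
      exact hH.per_ρ s hs (σ, z.2)
    have h2 : pd2 (ρ s) (z.1 + 1, z.2) = pd2 (ρ s) z := by
      show deriv (fun σ => ρ s (z.1 + 1, σ)) z.2 = deriv (fun σ => ρ s (z.1, σ)) z.2
      congr 1
      funext σ
      exact hH.per_ρ s hs (z.1, σ)
    simp only [hvecB, h1, h2]
  -- the essSup majorants
  set Abar : ℝ → ℝ≥0∞ := fun s => ⨆ q : ℚ × ℚ, (‖vecA s ((q.1 : ℝ), (q.2 : ℝ))‖₊ : ℝ≥0∞)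
    with hAbar
  set Bbar : ℝ → ℝ≥0∞ := fun s => ⨆ q : ℚ × ℚ, (‖vecB s ((q.1 : ℝ), (q.2 : ℝ))‖₊ : ℝ≥0∞)
    with hBbar
  set aa : ℝ → ℝ := fun s => (Abar s).toReal with haa
  set bb : ℝ → ℝ := fun s => (Bbar s).toReal with hbb
  have hABmeas : Measurable Abar ∧ Measurable Bbar := by
    constructor
    · refine Measurable.iSup fun q => ?_
      exact (ENNReal.continuous_coe.comp (continuous_nnnorm.comp
        (hvecAC.comp (continuous_id.prodMk continuous_const)))).measurable
    · refine Measurable.iSup fun q => ?_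
      exact (ENNReal.continuous_coe.comp (continuous_nnnorm.comp
        (hvecBC.comp (continuous_id.prodMk continuous_const)))).measurable
  -- bounds on Abar / Bbar
  have hAboundPt : ∀ s ∈ Icc (0:ℝ) T, ∀ y : Pt, ‖vecA s y‖ ≤ (L : ℝ) := by
    intro s hs y
    rw [← Stmt17Aux.per_shift (vecA s) (hperA s hs) y]
    set x : Pt := (Int.fract y.1, y.2) with hxdef
    have hx1 : 0 ≤ x.1 := Int.fract_nonneg _
    have hx2 : x.1 ≤ 1 := (Int.fract_lt_one _).le
    have hbound : ∀ f : Pt → ℝ, Continuous f → (∀ z1 z2 : Pt, |f z1 - f z2| ≤ (L : ℝ) * dist z1 z2)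
        → |osc f x| ≤ (L : ℝ) := by
      intro f hfc hflip
      have hie : osc f x = ∫ σ in (0:ℝ)..1, (f x - f (σ, x.2)) := by
        have hgint : IntervalIntegrable (fun σ : ℝ => f (σ, x.2)) volume 0 1 :=
          (show Continuous fun σ : ℝ => f (σ, x.2) from
            hfc.comp (continuous_id.prodMk continuous_const)).intervalIntegrable _ _
        rw [intervalIntegral.integral_sub intervalIntegrable_const hgint,
          intervalIntegral.integral_const]
        simp [osc, hav]
      rw [hie, ← Real.norm_eq_abs]
      have hb := intervalIntegral.norm_integral_le_of_norm_le_const (C := (L : ℝ))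
        (f := fun σ => f x - f (σ, x.2)) (a := 0) (b := 1) ?_
      · simpa using hb
      · intro σ hσ
        rw [Set.uIoc_of_le zero_le_one] at hσ
        have hd : dist x ((σ, x.2) : Pt) ≤ 1 := by
          rw [Prod.dist_eq]
          simp only [dist_self]
          refine max_le ?_ zero_le_one
          rw [Real.dist_eq, abs_le]
          constructor
          · linarith [hσ.2]
          · linarith [hσ.1.le]
        calc ‖f x - f (σ, x.2)‖ = |f x - f (σ, x.2)| := Real.norm_eq_abs _
          _ ≤ (L : ℝ) * dist x (σ, x.2) := hflip x (σ, x.2)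
          _ ≤ (L : ℝ) * 1 := mul_le_mul_of_nonneg_left hd hL0
          _ = (L : ℝ) := mul_one _
    have hlip1 : ∀ z1 z2 : Pt, |c1 (u s) z1 - c1 (u s) z2| ≤ (L : ℝ) * dist z1 z2 := by
      intro z1 z2
      have h1 : c1 (u s) z1 - c1 (u s) z2 = (u s z1 - u s z2).1 := rfl
      rw [h1, ← Real.norm_eq_abs]
      calc ‖(u s z1 - u s z2).1‖ ≤ ‖u s z1 - u s z2‖ := norm_fst_le _
        _ = dist (u s z1) (u s z2) := (dist_eq_norm _ _).symm
        _ ≤ (L : ℝ) * dist z1 z2 := (hLb s hs).dist_le_mul z1 z2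
    have hlip2 : ∀ z1 z2 : Pt, |c2 (u s) z1 - c2 (u s) z2| ≤ (L : ℝ) * dist z1 z2 := by
      intro z1 z2
      have h1 : c2 (u s) z1 - c2 (u s) z2 = (u s z1 - u s z2).2 := rfl
      rw [h1, ← Real.norm_eq_abs]
      calc ‖(u s z1 - u s z2).2‖ ≤ ‖u s z1 - u s z2‖ := norm_snd_le _
        _ = dist (u s z1) (u s z2) := (dist_eq_norm _ _).symm
        _ ≤ (L : ℝ) * dist z1 z2 := (hLb s hs).dist_le_mul z1 z2
    have hc1C : Continuous (c1 (u s)) :=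
      Continuous.fst (huC.comp (continuous_const.prodMk continuous_id))
    have hc2C : Continuous (c2 (u s)) :=
      Continuous.snd (huC.comp (continuous_const.prodMk continuous_id))
    rw [Prod.norm_def]
    refine max_le ?_ ?_
    · rw [Real.norm_eq_abs]; exact hbound _ hc1C hlip1
    · rw [Real.norm_eq_abs]; exact hbound _ hc2C hlip2

  have hBboundPt : ∀ s ∈ Icc (0:ℝ) T, ∀ y : Pt, ‖vecB s y‖ ≤ M := by
    intro s hs y
    rw [Prod.norm_def]
    exact max_le (by rw [Real.norm_eq_abs]; exact (hMb s hs y).2.1)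
      (by rw [Real.norm_eq_abs]; exact (hMb s hs y).2.2)
  have hAbarLe : ∀ s ∈ Icc (0:ℝ) T, Abar s ≤ ENNReal.ofReal (L : ℝ) := by
    intro s hs
    refine iSup_le fun q => ?_
    rw [← enorm_eq_nnnorm, ← ofReal_norm]
    exact ENNReal.ofReal_le_ofReal (hAboundPt s hs _)
  have hBbarLe : ∀ s ∈ Icc (0:ℝ) T, Bbar s ≤ ENNReal.ofReal M := by
    intro s hs
    refine iSup_le fun q => ?_
    rw [← enorm_eq_nnnorm, ← ofReal_norm]
    exact ENNReal.ofReal_le_ofReal (hBboundPt s hs _)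
  have hAbarTop : ∀ s ∈ Icc (0:ℝ) T, Abar s ≠ ⊤ :=
    fun s hs => ((hAbarLe s hs).trans_lt ENNReal.ofReal_lt_top).ne
  have hBbarTop : ∀ s ∈ Icc (0:ℝ) T, Bbar s ≠ ⊤ :=
    fun s hs => ((hBbarLe s hs).trans_lt ENNReal.ofReal_lt_top).ne
  have haaLe : ∀ s ∈ Icc (0:ℝ) T, aa s ≤ (L : ℝ) := by
    intro s hs
    have := ENNReal.toReal_mono ENNReal.ofReal_ne_top (hAbarLe s hs)
    rwa [ENNReal.toReal_ofReal hL0] at this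
  have hbbLe : ∀ s ∈ Icc (0:ℝ) T, bb s ≤ M := by
    intro s hs
    have := ENNReal.toReal_mono ENNReal.ofReal_ne_top (hBbarLe s hs)
    rwa [ENNReal.toReal_ofReal hM0] at this
  have haa0 : ∀ s, 0 ≤ aa s := fun s => ENNReal.toReal_nonneg
  have hbb0 : ∀ s, 0 ≤ bb s := fun s => ENNReal.toReal_nonneg
  -- pointwise domination by aa/bb
  have hAPt : ∀ s ∈ Icc (0:ℝ) T, ∀ y : Pt, ‖vecA s y‖ ≤ aa s := by
    intro s hs y
    have h1 : (‖vecA s y‖₊ : ℝ≥0∞) ≤ Abar s :=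
      Stmt17Aux.le_iSup_rat (vecA s) (hvecAC.comp (continuous_const.prodMk continuous_id)) y
    have := ENNReal.toReal_mono (hAbarTop s hs) h1
    simpa using this
  have hBPt : ∀ s ∈ Icc (0:ℝ) T, ∀ y : Pt, ‖vecB s y‖ ≤ bb s := by
    intro s hs y
    have h1 : (‖vecB s y‖₊ : ℝ≥0∞) ≤ Bbar s :=
      Stmt17Aux.le_iSup_rat (vecB s) (hvecBC.comp (continuous_const.prodMk continuous_id)) y
    have := ENNReal.toReal_mono (hBbarTop s hs) h1
    simpa using this
  -- Abar/Bbar below the eLpNorms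
  have hAbarLp : ∀ s ∈ Icc (0:ℝ) T,
      Abar s ≤ eLpNorm (fun x => (osc (c1 (u s)) x, osc (c2 (u s)) x)) ⊤ μΩ := by
    intro s hs
    refine iSup_le fun q => ?_
    exact Stmt17Aux.nnnorm_le_eLpNormTop_per (vecA s)
      (hvecAC.comp (continuous_const.prodMk continuous_id)) (hperA s hs) _
  have hBbarLp : ∀ s ∈ Icc (0:ℝ) T,
      Bbar s ≤ eLpNorm (fun x => (pd1 (ρ s) x, pd2 (ρ s) x)) ⊤ μΩ := by
    intro s hs
    refine iSup_le fun q => ?_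
    exact Stmt17Aux.nnnorm_le_eLpNormTop_per (vecB s)
      (hvecBC.comp (continuous_const.prodMk continuous_id)) (hperB s hs) _
  -- continuity of the oscillation of ρ, and facts about the initial oscillation
  have hhavρ : Continuous (fun p : ℝ × Pt => hav (ρ p.1) p.2) :=
    Stmt17Aux.cont_paramInt (X := ℝ × Pt) (fun p σ => ρ p.1 (σ, p.2.2))
      (hρ.continuous.comp ((continuous_fst.comp continuous_fst).prodMk
        (continuous_snd.prodMk (continuous_snd.comp (continuous_snd.comp continuous_fst)))))
  have hoscρC : Continuous (fun p : ℝ × Pt => osc (ρ p.1) p.2) := hρC.sub hhavρ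
  have hosc0C : Continuous (fun y : Pt => osc ρ₀ y) := by
    rw [← hH.init_ρ]
    exact hoscρC.comp (continuous_const.prodMk continuous_id)
  have hosc0per : ∀ z : Pt, osc ρ₀ (z.1 + 1, z.2) = osc ρ₀ z := by
    intro z
    have h := hH.per_ρ 0 ⟨le_refl 0, hT⟩
    rw [hH.init_ρ] at h
    simp only [osc, hav]
    rw [h z]
  have hρ₀bdd : ∀ y : Pt, |ρ₀ y| ≤ M := by
    intro y
    have := (hMb 0 ⟨le_refl 0, hT⟩ y).1
    rwa [hH.init_ρ] at this
  have hosc0bdd : ∀ y : Pt, |osc ρ₀ y| ≤ 2 * M := by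
    intro y
    have h1 : |hav ρ₀ y| ≤ M := by
      rw [← Real.norm_eq_abs]
      have hb := intervalIntegral.norm_integral_le_of_norm_le_const (C := M)
        (f := fun σ => ρ₀ (σ, y.2)) (a := 0) (b := 1)
        (fun σ _ => by rw [Real.norm_eq_abs]; exact hρ₀bdd _)
      simpa [hav] using hb
    have habs : |ρ₀ y - hav ρ₀ y| ≤ |ρ₀ y| + |hav ρ₀ y| := by
      have := abs_add_le (ρ₀ y) (-(hav ρ₀ y))
      simpa [sub_eq_add_neg] using this
    have := hρ₀bdd y
    calc |osc ρ₀ y| = |ρ₀ y - hav ρ₀ y| := rfl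
      _ ≤ |ρ₀ y| + |hav ρ₀ y| := habs
      _ ≤ 2 * M := by linarith
  have hLp0top : eLpNorm (fun y => osc ρ₀ y) ⊤ μΩ ≠ ⊤ := by
    rw [eLpNorm_exponent_top]
    exact ((eLpNormEssSup_le_of_ae_bound (C := 2 * M) (ae_of_all _ fun y => by
      rw [Real.norm_eq_abs]; exact hosc0bdd y)).trans_lt ENNReal.ofReal_lt_top).ne
  set k₀ : ℝ := (eLpNorm (fun y => osc ρ₀ y) ⊤ μΩ).toReal with hk₀def
  have hk₀pt : ∀ y : Pt, |osc ρ₀ y| ≤ k₀ := by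
    intro y
    have h1 : (‖osc ρ₀ y‖₊ : ℝ≥0∞) ≤ ⨆ q : ℚ × ℚ, (‖osc ρ₀ ((q.1 : ℝ), (q.2 : ℝ))‖₊ : ℝ≥0∞) :=
      Stmt17Aux.le_iSup_rat (fun y => osc ρ₀ y) hosc0C y
    have h2 : (⨆ q : ℚ × ℚ, (‖osc ρ₀ ((q.1 : ℝ), (q.2 : ℝ))‖₊ : ℝ≥0∞))
        ≤ eLpNorm (fun y => osc ρ₀ y) ⊤ μΩ :=
      iSup_le fun q => Stmt17Aux.nnnorm_le_eLpNormTop_per _ hosc0C hosc0per _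
    have := ENNReal.toReal_mono hLp0top (h1.trans h2)
    simpa [hk₀def] using this
  -- integrability of the majorant
  have haaM : Measurable aa := hABmeas.1.ennreal_toReal
  have hbbM : Measurable bb := hABmeas.2.ennreal_toReal
  have hab3int : Integrable (fun s => 3 * (aa s * bb s)) (volume.restrict (Ioc (0:ℝ) t)) := by
    refine Integrable.mono' (g := fun _ => 3 * ((L : ℝ) * M)) ?_ ?_ ?_
    · exact integrableOn_const measure_Ioc_lt_top.ne
    · exact (((haaM.mul hbbM).const_mul 3)).aestronglyMeasurable
    · rw [ae_restrict_iff' measurableSet_Ioc]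
      refine ae_of_all _ fun s hs => ?_
      have hsT : s ∈ Icc (0:ℝ) T := ⟨hs.1.le, hs.2.trans ht.2⟩
      have hnn : 0 ≤ aa s * bb s := mul_nonneg (haa0 s) (hbb0 s)
      rw [Real.norm_eq_abs, abs_of_nonneg (by linarith)]
      have h1 := mul_le_mul (haaLe s hsT) (hbbLe s hsT) (hbb0 s) hL0
      show 3 * (aa s * bb s) ≤ 3 * ((L : ℝ) * M)
      linarith
  have h3ii : IntervalIntegrable (fun s => 3 * (aa s * bb s)) volume 0 t := by
    rw [intervalIntegrable_iff, Set.uIoc_of_le ht.1]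
    exact hab3int
  -- pointwise estimate via the flow
  have hpoint : ∀ x : Pt, |osc (ρ t) x| ≤ k₀ + ∫ s in (0:ℝ)..t, 3 * (aa s * bb s) := by
    intro x
    set cl : ℝ → ℝ := fun s => min (max s 0) T with hcldef
    have hclmem : ∀ s, cl s ∈ Icc (0:ℝ) T :=
      fun s => ⟨le_min (le_max_right s 0) hT, min_le_right _ _⟩
    have hcleq : ∀ s ∈ Icc (0:ℝ) t, cl s = s := by
      intro s hs
      have h1 : max s 0 = s := max_eq_left hs.1
      show min (max s 0) T = s
      rw [h1]
      exact min_eq_left (hs.2.trans ht.2)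
    set v : ℝ → Pt → Pt := fun s y => u (cl s) y with hvdef
    have hclC : Continuous cl := (continuous_id.max continuous_const).min continuous_const
    have hvC : Continuous (Function.uncurry v) :=
      hu.continuous.comp ((hclC.comp continuous_fst).prodMk continuous_snd)
    have hvLip : ∀ s, LipschitzWith L (v s) := fun s => hLb (cl s) (hclmem s)
    obtain ⟨n, hn⟩ := exists_nat_ge (t * (2 * ((L : ℝ) + 1)))
    have hc2 : (0:ℝ) < 2 * ((L : ℝ) + 1) := by positivity
    have hlen : t - 0 ≤ (n : ℝ) * (2 * ((L : ℝ) + 1))⁻¹ := by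
      rw [sub_zero, ← div_eq_mul_inv, le_div_iff₀ hc2]
      exact hn
    obtain ⟨γ, hγt, hγv⟩ := Stmt17Aux.ode_glue v L hvC hvLip n 0 t ht.1 hlen x
    have hγu : ∀ s ∈ Icc (0:ℝ) t, HasDerivWithinAt γ (u s (γ s)) (Icc 0 t) s := by
      intro s hs
      have h0 := hγv s hs
      have he : v s (γ s) = u s (γ s) := by
        show u (cl s) (γ s) = u s (γ s)
        rw [hcleq s hs]
      rwa [he] at h0
    have hγcont : ContinuousOn γ (Icc (0:ℝ) t) := fun s hs => (hγu s hs).continuousWithinAt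
    -- ρ is constant along the flow
    have hΦconst : ρ t (γ t) = ρ 0 (γ 0) := by
      have hderiv : ∀ s ∈ Icc (0:ℝ) t, HasDerivWithinAt (fun s => ρ s (γ s)) 0 (Icc 0 t) s := by
        intro s hs
        have hmap : HasDerivWithinAt (fun τ : ℝ => (τ, γ τ)) ((1:ℝ), u s (γ s)) (Icc 0 t) s :=
          (hasDerivWithinAt_id s _).prodMk (hγu s hs)
        have h0 := (Stmt17Aux.hasFDerivAt_unc hρ s (γ s)).comp_hasDerivWithinAt s hmap
        have hval : fderiv ℝ (Function.uncurry ρ) (s, γ s) ((1:ℝ), u s (γ s)) = 0 := by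
          have hd := Stmt17Aux.fderiv_apply_decomp
            (fderiv ℝ (Function.uncurry ρ) (s, γ s)) 1 (u s (γ s)).1 (u s (γ s)).2
          rw [show ((1:ℝ), ((u s (γ s)).1, (u s (γ s)).2)) = ((1:ℝ), u s (γ s)) from by
            rw [Prod.mk.eta]] at hd
          rw [hd, ← Stmt17Aux.dt_eq hρ s (γ s), ← Stmt17Aux.pd1_eq hρ s (γ s),
            ← Stmt17Aux.pd2_eq hρ s (γ s), one_mul]
          have htr := hH.transport s (hIccsub hs) (γ s)
          linarith
        rwa [hval] at h0
      have hcont : ContinuousOn (fun s => ρ s (γ s)) (Icc 0 t) :=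
        fun s hs => (hderiv s hs).continuousWithinAt
      have hderiv' : ∀ s ∈ Ico (0:ℝ) t, HasDerivWithinAt (fun s => ρ s (γ s)) 0 (Ici s) s := by
        intro s hs
        have hmem : Icc (0:ℝ) t ∈ nhdsWithin s (Ici s) :=
          mem_nhdsWithin.mpr ⟨Iio t, isOpen_Iio, hs.2, fun w hw => ⟨le_trans hs.1 hw.2, hw.1.le⟩⟩
        exact (hderiv s ⟨hs.1, hs.2.le⟩).mono_of_mem_nhdsWithin hmem
      exact constant_of_has_deriv_right_zero hcont hderiv' t ⟨ht.1, le_refl t⟩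
    -- the averaged quantity along the flow
    set zz : ℝ → ℝ := fun s => (γ s).2 with hzzdef
    set ww : ℝ → ℝ := fun s => (u s (γ s)).2 with hwwdef
    set Ψ : ℝ → ℝ := fun s => ∫ σ in (0:ℝ)..1, ρ s (σ, zz s) with hΨdef
    set Ψ' : ℝ → ℝ := fun s => ∫ σ in (0:ℝ)..1,
      (fderiv ℝ (Function.uncurry ρ) (s, (σ, zz s))) (1, (0, ww s)) with hΨ'def
    have hwwcont : ContinuousOn ww (Icc (0:ℝ) t) :=
      continuous_snd.comp_continuousOn (huC.comp_continuousOn (continuousOn_id.prodMk hγcont))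
    have hΨjoint : Continuous (fun p : ℝ × ℝ => ∫ σ in (0:ℝ)..1, ρ p.1 (σ, p.2)) :=
      Stmt17Aux.cont_paramInt (X := ℝ × ℝ) (fun p σ => ρ p.1 (σ, p.2))
        (hρ.continuous.comp ((continuous_fst.comp continuous_fst).prodMk
          (continuous_snd.prodMk (continuous_snd.comp continuous_fst))))
    have hΨcont : ContinuousOn Ψ (Icc (0:ℝ) t) :=
      hΨjoint.comp_continuousOn (continuousOn_id.prodMk (continuous_snd.comp_continuousOn hγcont))
    have hΨ'joint : Continuous (fun p : (ℝ × ℝ) × ℝ =>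
        ∫ σ in (0:ℝ)..1, (fderiv ℝ (Function.uncurry ρ) (p.1.1, (σ, p.1.2))) (1, (0, p.2))) := by
      refine Stmt17Aux.cont_paramInt (X := (ℝ × ℝ) × ℝ)
        (fun p σ => (fderiv ℝ (Function.uncurry ρ) (p.1.1, (σ, p.1.2))) (1, (0, p.2))) ?_
      apply Continuous.clm_apply
      · exact (hρ.continuous_fderiv (by simp)).comp
          ((continuous_fst.comp (continuous_fst.comp continuous_fst)).prodMk
            (continuous_snd.prodMk (continuous_snd.comp (continuous_fst.comp continuous_fst))))
      · exact continuous_const.prodMk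
          (continuous_const.prodMk (continuous_snd.comp continuous_fst))
    have hΨ'cont : ContinuousOn Ψ' (Icc (0:ℝ) t) :=
      hΨ'joint.comp_continuousOn
        ((continuousOn_id.prodMk (continuous_snd.comp_continuousOn hγcont)).prodMk hwwcont)
    have hΨderiv : ∀ s ∈ Ioo (0:ℝ) t, HasDerivAt Ψ (Ψ' s) s := by
      intro s hs
      set ε : ℝ := min s (t - s) with hεdef
      have hε : 0 < ε := lt_min hs.1 (by linarith [hs.2])
      have hball : Metric.ball s ε ⊆ Ioo (0:ℝ) t := by
        intro y hy
        rw [Metric.mem_ball, Real.dist_eq, abs_lt] at hy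
        have h1 : ε ≤ s := min_le_left _ _
        have h2 : ε ≤ t - s := min_le_right _ _
        exact ⟨by linarith [hy.1], by linarith [hy.2]⟩
      have hz : ∀ s' ∈ Metric.ball s ε, HasDerivAt zz (ww s') s' := by
        intro s' hs'
        have hs'I : s' ∈ Icc (0:ℝ) t := Ioo_subset_Icc_self (hball hs')
        have h1 : HasDerivAt γ (u s' (γ s')) s' :=
          (hγu s' hs'I).hasDerivAt (Icc_mem_nhds (hball hs').1 (hball hs').2)
        exact (ContinuousLinearMap.snd ℝ ℝ ℝ).hasFDerivAt.comp_hasDerivAt s' h1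
      have hwball : ContinuousOn ww (Metric.ball s ε) := by
        intro y hy
        have hγy : ContinuousAt γ y := ((hγu y (Ioo_subset_Icc_self (hball hy))).hasDerivAt
          (Icc_mem_nhds (hball hy).1 (hball hy).2)).continuousAt
        have h2 : ContinuousAt (fun s' : ℝ => (s', γ s')) y := continuousAt_id.prodMk hγy
        have h3 : ContinuousAt (fun s' : ℝ => u s' (γ s')) y := (huC.continuousAt).comp h2
        exact h3.snd.continuousWithinAt
      exact Stmt17Aux.hasDerivAt_havInt hρ zz ww s ε hε hz hwball
    have hΨ'ii : IntervalIntegrable Ψ' volume 0 t := by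
      apply ContinuousOn.intervalIntegrable
      rwa [Set.uIcc_of_le ht.1]
    have hFTC : ∫ s in (0:ℝ)..t, Ψ' s = Ψ t - Ψ 0 :=
      intervalIntegral.integral_eq_sub_of_hasDeriv_right_of_le ht.1 hΨcont
        (fun s hs => (hΨderiv s hs).hasDerivWithinAt) hΨ'ii
    -- the bound on Ψ'
    have hΨ'bd : ∀ s ∈ Icc (0:ℝ) t, |Ψ' s| ≤ 3 * (aa s * bb s) := by
      intro s hs
      have hsT : s ∈ Icc (0:ℝ) T := hIccsub hs
      have hint1 : Continuous (fun σ : ℝ => pd1 (ρ s) (σ, zz s)) :=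
        hpd1C.comp (continuous_const.prodMk (continuous_id.prodMk continuous_const))
      have hint2 : Continuous (fun σ : ℝ => pd2 (ρ s) (σ, zz s)) :=
        hpd2C.comp (continuous_const.prodMk (continuous_id.prodMk continuous_const))
      have hosc1' : Continuous (fun σ : ℝ => osc (c1 (u s)) (σ, zz s)) :=
        hosc1.comp (continuous_const.prodMk (continuous_id.prodMk continuous_const))
      have hosc2' : Continuous (fun σ : ℝ => osc (c2 (u s)) (σ, zz s)) :=
        hosc2.comp (continuous_const.prodMk (continuous_id.prodMk continuous_const))
      have hgdecomp : ∀ σ : ℝ,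
          (fderiv ℝ (Function.uncurry ρ) (s, (σ, zz s))) (1, (0, ww s))
            = (-(osc (c1 (u s)) (σ, zz s)) * pd1 (ρ s) (σ, zz s)
                - (osc (c2 (u s)) (σ, zz s) - osc (c2 (u s)) (γ s)) * pd2 (ρ s) (σ, zz s))
              + (-(hav (c1 (u s)) (γ s))) * pd1 (ρ s) (σ, zz s) := by
        intro σ
        have hd := Stmt17Aux.fderiv_apply_decomp
          (fderiv ℝ (Function.uncurry ρ) (s, (σ, zz s))) 1 0 (ww s)
        rw [hd, ← Stmt17Aux.dt_eq hρ s (σ, zz s), ← Stmt17Aux.pd1_eq hρ s (σ, zz s),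
          ← Stmt17Aux.pd2_eq hρ s (σ, zz s)]
        have htr := hH.transport s hsT (σ, zz s)
        have hdt : deriv (fun τ => ρ τ ((σ, zz s) : Pt)) s
            = -((u s (σ, zz s)).1 * pd1 (ρ s) (σ, zz s))
              - (u s (σ, zz s)).2 * pd2 (ρ s) (σ, zz s) := by linarith
        have hh1 : hav (c1 (u s)) ((σ, zz s) : Pt) = hav (c1 (u s)) (γ s) := rfl
        have hh2 : hav (c2 (u s)) ((σ, zz s) : Pt) = hav (c2 (u s)) (γ s) := rfl
        have hosc_split1 : (u s (σ, zz s)).1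
            = osc (c1 (u s)) (σ, zz s) + hav (c1 (u s)) (γ s) := by
          simp only [osc]
          rw [hh1, sub_add_cancel]
          rfl
        have hosc_split2 : (u s (σ, zz s)).2
            = osc (c2 (u s)) (σ, zz s) + hav (c2 (u s)) (γ s) := by
          simp only [osc]
          rw [hh2, sub_add_cancel]
          rfl
        have hw_split : ww s = osc (c2 (u s)) (γ s) + hav (c2 (u s)) (γ s) := by
          simp only [osc]
          rw [sub_add_cancel]
          rfl
        rw [hdt, hosc_split1, hosc_split2, hw_split]
        ring
      have hP1zero : ∫ σ in (0:ℝ)..1, pd1 (ρ s) (σ, zz s) = 0 := by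
        have hder : ∀ σ ∈ Set.uIcc (0:ℝ) 1, HasDerivAt (fun σ' => ρ s (σ', zz s))
            (pd1 (ρ s) (σ, zz s)) σ := by
          intro σ _
          have h0 := Stmt17Aux.hasDerivAt_pd1 hρ s (σ, zz s)
          rwa [← Stmt17Aux.pd1_eq hρ s (σ, zz s)] at h0
        rw [intervalIntegral.integral_eq_sub_of_hasDerivAt hder (hint1.intervalIntegrable _ _)]
        have hper := hH.per_ρ s hsT ((0 : ℝ), zz s)
        rw [zero_add] at hper
        rw [hper, sub_self]
      have hΨ'eq : Ψ' s = ∫ σ in (0:ℝ)..1,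
          (-(osc (c1 (u s)) (σ, zz s)) * pd1 (ρ s) (σ, zz s)
            - (osc (c2 (u s)) (σ, zz s) - osc (c2 (u s)) (γ s)) * pd2 (ρ s) (σ, zz s)) := by
        have h1 : Ψ' s = ∫ σ in (0:ℝ)..1,
            ((-(osc (c1 (u s)) (σ, zz s)) * pd1 (ρ s) (σ, zz s)
              - (osc (c2 (u s)) (σ, zz s) - osc (c2 (u s)) (γ s)) * pd2 (ρ s) (σ, zz s))
              + (-(hav (c1 (u s)) (γ s))) * pd1 (ρ s) (σ, zz s)) :=
          intervalIntegral.integral_congr (fun σ _ => hgdecomp σ)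
        rw [h1, intervalIntegral.integral_add
          (f := fun σ => -(osc (c1 (u s)) (σ, zz s)) * pd1 (ρ s) (σ, zz s)
            - (osc (c2 (u s)) (σ, zz s) - osc (c2 (u s)) (γ s)) * pd2 (ρ s) (σ, zz s))
          (g := fun σ => -(hav (c1 (u s)) (γ s)) * pd1 (ρ s) (σ, zz s))
          (((hosc1'.neg.mul hint1).sub
            ((hosc2'.sub continuous_const).mul hint2)).intervalIntegrable _ _)
          ((continuous_const.mul hint1).intervalIntegrable _ _),
          intervalIntegral.integral_const_mul, hP1zero, mul_zero, add_zero]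
      rw [hΨ'eq, ← Real.norm_eq_abs]
      have hb := intervalIntegral.norm_integral_le_of_norm_le_const (C := 3 * (aa s * bb s))
        (a := 0) (b := 1)
        (f := fun σ => (-(osc (c1 (u s)) (σ, zz s)) * pd1 (ρ s) (σ, zz s)
          - (osc (c2 (u s)) (σ, zz s) - osc (c2 (u s)) (γ s)) * pd2 (ρ s) (σ, zz s))) ?_
      · simpa using hb
      · intro σ hσ
        have ho1 : |osc (c1 (u s)) (σ, zz s)| ≤ aa s := by
          have h0 := hAPt s hsT (σ, zz s)
          rw [Prod.norm_def] at h0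
          have h := le_trans (le_max_left _ _) h0
          rwa [Real.norm_eq_abs] at h
        have ho2 : |osc (c2 (u s)) (σ, zz s)| ≤ aa s := by
          have h0 := hAPt s hsT (σ, zz s)
          rw [Prod.norm_def] at h0
          have h := le_trans (le_max_right _ _) h0
          rwa [Real.norm_eq_abs] at h
        have ho2' : |osc (c2 (u s)) (γ s)| ≤ aa s := by
          have h0 := hAPt s hsT (γ s)
          rw [Prod.norm_def] at h0
          have h := le_trans (le_max_right _ _) h0
          rwa [Real.norm_eq_abs] at h
        have hp1 : |pd1 (ρ s) (σ, zz s)| ≤ bb s := by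
          have h0 := hBPt s hsT (σ, zz s)
          rw [Prod.norm_def] at h0
          have h := le_trans (le_max_left _ _) h0
          rwa [Real.norm_eq_abs] at h
        have hp2 : |pd2 (ρ s) (σ, zz s)| ≤ bb s := by
          have h0 := hBPt s hsT (σ, zz s)
          rw [Prod.norm_def] at h0
          have h := le_trans (le_max_right _ _) h0
          rwa [Real.norm_eq_abs] at h
        rw [Real.norm_eq_abs]
        have hA1 : |(-(osc (c1 (u s)) (σ, zz s))) * pd1 (ρ s) (σ, zz s)| ≤ aa s * bb s := by
          rw [abs_mul, abs_neg]
          exact mul_le_mul ho1 hp1 (abs_nonneg _) (haa0 s)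
        have hA2 : |(osc (c2 (u s)) (σ, zz s) - osc (c2 (u s)) (γ s)) * pd2 (ρ s) (σ, zz s)|
            ≤ (aa s + aa s) * bb s := by
          rw [abs_mul]
          refine mul_le_mul ?_ hp2 (abs_nonneg _) (by linarith [haa0 s])
          have h0 := abs_add_le (osc (c2 (u s)) (σ, zz s)) (-(osc (c2 (u s)) (γ s)))
          rw [abs_neg] at h0
          rw [sub_eq_add_neg]
          exact h0.trans (add_le_add ho2 ho2')
        have habs : |(-(osc (c1 (u s)) (σ, zz s))) * pd1 (ρ s) (σ, zz s)
            - (osc (c2 (u s)) (σ, zz s) - osc (c2 (u s)) (γ s)) * pd2 (ρ s) (σ, zz s)|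
            ≤ aa s * bb s + (aa s + aa s) * bb s := by
          have h0 := abs_add_le ((-(osc (c1 (u s)) (σ, zz s))) * pd1 (ρ s) (σ, zz s))
            (-((osc (c2 (u s)) (σ, zz s) - osc (c2 (u s)) (γ s)) * pd2 (ρ s) (σ, zz s)))
          rw [abs_neg] at h0
          have h1 := add_le_add hA1 hA2
          calc |(-(osc (c1 (u s)) (σ, zz s))) * pd1 (ρ s) (σ, zz s)
              - (osc (c2 (u s)) (σ, zz s) - osc (c2 (u s)) (γ s)) * pd2 (ρ s) (σ, zz s)|
              ≤ |(-(osc (c1 (u s)) (σ, zz s))) * pd1 (ρ s) (σ, zz s)|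
                + |(osc (c2 (u s)) (σ, zz s) - osc (c2 (u s)) (γ s)) * pd2 (ρ s) (σ, zz s)| := by
                rw [sub_eq_add_neg]
                exact h0
            _ ≤ aa s * bb s + (aa s + aa s) * bb s := h1
        calc |(-(osc (c1 (u s)) (σ, zz s)) * pd1 (ρ s) (σ, zz s)
            - (osc (c2 (u s)) (σ, zz s) - osc (c2 (u s)) (γ s)) * pd2 (ρ s) (σ, zz s))|
            ≤ aa s * bb s + (aa s + aa s) * bb s := habs
          _ ≤ 3 * (aa s * bb s) := by nlinarith [haa0 s, hbb0 s]
    -- assemble the pointwise bound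
    have hΨdiff : |Ψ t - Ψ 0| ≤ ∫ s in (0:ℝ)..t, 3 * (aa s * bb s) := by
      rw [← hFTC]
      have hup : (∫ s in (0:ℝ)..t, Ψ' s) ≤ ∫ s in (0:ℝ)..t, 3 * (aa s * bb s) :=
        intervalIntegral.integral_mono_on ht.1 hΨ'ii h3ii
          (fun s hs => (abs_le.1 (hΨ'bd s hs)).2)
      have hlo : -(∫ s in (0:ℝ)..t, 3 * (aa s * bb s)) ≤ ∫ s in (0:ℝ)..t, Ψ' s := by
        rw [← intervalIntegral.integral_neg]
        exact intervalIntegral.integral_mono_on ht.1 h3ii.neg hΨ'ii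
          (fun s hs => (abs_le.1 (hΨ'bd s hs)).1)
      exact abs_le.2 ⟨by linarith, hup⟩
    have h1 : osc (ρ t) x = ρ t (γ t) - Ψ t := by
      rw [← hγt]
      simp only [hΨdef, hzzdef, osc, hav]
    have h2 : Ψ 0 = hav ρ₀ (γ 0) := by
      rw [← hH.init_ρ]
      simp only [hΨdef, hzzdef, hav]
    have h3 : ρ t (γ t) = ρ₀ (γ 0) := by
      rw [hΦconst]
      exact congrFun hH.init_ρ (γ 0)
    have hoscx : osc (ρ t) x = osc ρ₀ (γ 0) - (Ψ t - Ψ 0) := by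
      rw [h1, h3]
      simp only [osc]
      rw [h2]
      ring
    calc |osc (ρ t) x| = |osc ρ₀ (γ 0) - (Ψ t - Ψ 0)| := by rw [hoscx]
      _ ≤ |osc ρ₀ (γ 0)| + |Ψ t - Ψ 0| := by
          have h0 := abs_add_le (osc ρ₀ (γ 0)) (-(Ψ t - Ψ 0))
          rw [abs_neg] at h0
          rw [sub_eq_add_neg]
          exact h0
      _ ≤ k₀ + ∫ s in (0:ℝ)..t, 3 * (aa s * bb s) := add_le_add (hk₀pt _) hΨdiff
  -- final assembly
  have hLHS : eLpNorm (fun x => osc (ρ t) x) ⊤ μΩ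
      ≤ ENNReal.ofReal (k₀ + ∫ s in (0:ℝ)..t, 3 * (aa s * bb s)) := by
    rw [eLpNorm_exponent_top]
    exact eLpNormEssSup_le_of_ae_bound (ae_of_all _ fun y => by
      rw [Real.norm_eq_abs]; exact hpoint y)
  have hk0le : ENNReal.ofReal k₀ ≤ eLpNorm (fun y => osc ρ₀ y) ⊤ μΩ := ENNReal.ofReal_toReal_le
  have hintle : ENNReal.ofReal (∫ s in (0:ℝ)..t, 3 * (aa s * bb s))
      ≤ ENNReal.ofReal 3 * ∫⁻ s in Ioc (0:ℝ) t,
          eLpNorm (fun x => (osc (c1 (u s)) x, osc (c2 (u s)) x)) ⊤ μΩ *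
            eLpNorm (fun x => (pd1 (ρ s) x, pd2 (ρ s) x)) ⊤ μΩ := by
    rw [intervalIntegral.integral_of_le ht.1]
    rw [ofReal_integral_eq_lintegral_ofReal hab3int
      ((ae_restrict_iff' measurableSet_Ioc).2 (ae_of_all _ fun s _ => by
        have := mul_nonneg (haa0 s) (hbb0 s)
        show (0:ℝ) ≤ 3 * (aa s * bb s)
        linarith))]
    rw [← lintegral_const_mul' _ _ ENNReal.ofReal_ne_top]
    refine lintegral_mono_ae ((ae_restrict_iff' measurableSet_Ioc).2 (ae_of_all _ fun s hs => ?_))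
    have hsT : s ∈ Icc (0:ℝ) T := ⟨hs.1.le, hs.2.trans ht.2⟩
    calc ENNReal.ofReal (3 * (aa s * bb s))
        = ENNReal.ofReal 3 * ENNReal.ofReal (aa s * bb s) := ENNReal.ofReal_mul (by norm_num)
      _ ≤ ENNReal.ofReal 3 * (Abar s * Bbar s) := by
          refine mul_le_mul_right ?_ _
          have he : aa s * bb s = (Abar s * Bbar s).toReal := (ENNReal.toReal_mul).symm
          rw [he]
          exact ENNReal.ofReal_toReal_le
      _ ≤ ENNReal.ofReal 3 * (eLpNorm (fun x => (osc (c1 (u s)) x, osc (c2 (u s)) x)) ⊤ μΩ *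
            eLpNorm (fun x => (pd1 (ρ s) x, pd2 (ρ s) x)) ⊤ μΩ) :=
          mul_le_mul_right (mul_le_mul' (hAbarLp s hsT) (hBbarLp s hsT)) _
  calc eLpNorm (fun x => osc (ρ t) x) ⊤ μΩ
      ≤ ENNReal.ofReal (k₀ + ∫ s in (0:ℝ)..t, 3 * (aa s * bb s)) := hLHS
    _ ≤ ENNReal.ofReal k₀ + ENNReal.ofReal (∫ s in (0:ℝ)..t, 3 * (aa s * bb s)) :=
        ENNReal.ofReal_add_le
    _ ≤ eLpNorm (fun x => osc ρ₀ x) ⊤ μΩ + ENNReal.ofReal 3 * ∫⁻ s in Ioc (0:ℝ) t,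
          eLpNorm (fun x => (osc (c1 (u s)) x, osc (c2 (u s)) x)) ⊤ μΩ *
            eLpNorm (fun x => (pd1 (ρ s) x, pd2 (ρ s) x)) ⊤ μΩ := add_le_add hk0le hintle
end
end
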